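/- arXiv:2201.11151 — 10 statements merged into one kernel-verified Lean document; each statement's English description precedes it below -/
import Mathlib

section
/- Let m, n ≥ 2 and let t satisfy 1 ≤ t ≤ ⌈(m+n−2)/2⌉. Then the t-graph Γ(m,n,t) has no isolated vertices, i.e., every vertex has positive degree. -/
/-- The `t`-graph `Γ(m,n,t)`: vertices are `Fin m × Fin n` (the vertex `(i,j)` encoding
`a^i b^j`), and two distinct vertices `(i,j)`, `(k,l)` are adjacent iff
`|i - k| + |j - l| = t` (comparing coordinates as integers). -/
def tGraph (m n t : ℕ) : SimpleGraph (Fin m × Fin n) where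
  Adj x y := x ≠ y ∧ |(x.1 : ℤ) - (y.1 : ℤ)| + |(x.2 : ℤ) - (y.2 : ℤ)| = t
  symm := ⟨by
    rintro x y ⟨h1, h2⟩
    exact ⟨h1.symm, by rw [abs_sub_comm ((y.1 : ℤ)), abs_sub_comm ((y.2 : ℤ))]; exact h2⟩⟩
  loopless := ⟨fun x ⟨h, _⟩ => h rfl⟩

instance (m n t : ℕ) : DecidableRel (tGraph m n t).Adj := fun x y =>
  inferInstanceAs (Decidable (x ≠ y ∧ |(x.1 : ℤ) - (y.1 : ℤ)| + |(x.2 : ℤ) - (y.2 : ℤ)| = t))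

/-- For `m, n ≥ 2` and `1 ≤ t ≤ ⌈(m + n - 2)/2⌉`, the `t`-graph `Γ(m,n,t)` has no isolated
vertices: every vertex has positive degree. -/
theorem tGraph_no_isolated_vertices (m n t : ℕ) (hm : 2 ≤ m) (hn : 2 ≤ n) (ht : 1 ≤ t)
    (htub : t ≤ (m + n - 2 + 1) / 2) :
    ∀ v : Fin m × Fin n, 0 < (tGraph m n t).degree v := by
  intro v
  rw [SimpleGraph.degree_pos_iff_exists_adj]
  obtain ⟨i, j⟩ := v
  have hi := i.isLt
  have hj := j.isLt
  set Mh := max i.val (m - 1 - i.val) with hMh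
  set Mv := max j.val (n - 1 - j.val) with hMv
  have htMM : t ≤ Mh + Mv := by omega
  set a := min t Mh with hA
  set b := t - a with hB
  have hab : a + b = t := by omega
  have haM : a ≤ Mh := by omega
  have hbM : b ≤ Mv := by omega
  obtain ⟨k, hk, hkd⟩ : ∃ k, k < m ∧ (k = i.val + a ∨ k + a = i.val) := by
    by_cases h : a ≤ m - 1 - i.val
    · exact ⟨i.val + a, by omega, Or.inl rfl⟩
    · exact ⟨i.val - a, by omega, Or.inr (by omega)⟩
  obtain ⟨l, hl, hld⟩ : ∃ l, l < n ∧ (l = j.val + b ∨ l + b = j.val) := by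
    by_cases h : b ≤ n - 1 - j.val
    · exact ⟨j.val + b, by omega, Or.inl rfl⟩
    · exact ⟨j.val - b, by omega, Or.inr (by omega)⟩
  refine ⟨(⟨k, hk⟩, ⟨l, hl⟩), ?_, ?_⟩
  · intro heq
    have h1 : i.val = k := congrArg (fun p => (p.1 : Fin m).val) heq
    have h2 : j.val = l := congrArg (fun p => (p.2 : Fin n).val) heq
    omega
  · simp only
    rcases abs_cases ((i.val : ℤ) - (k : ℤ)) with ⟨hX, _⟩ | ⟨hX, _⟩ <;>
      rcases abs_cases ((j.val : ℤ) - (l : ℤ)) with ⟨hY, _⟩ | ⟨hY, _⟩ <;>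
      rw [hX, hY] <;> omega
end

section
/- Let m, n ≥ 2 and let t be an even number with 2 ≤ t ≤ ⌈(m+n−2)/2⌉. Then the t-graph Γ(m,n,t) has exactly 2 connected components. -/
namespace TGaux

variable {m n t : ℕ}

lemma adj_of (ht : t ≠ 0) {x y : Fin m × Fin n}
    (h : |(x.1 : ℤ) - (y.1 : ℤ)| + |(x.2 : ℤ) - (y.2 : ℤ)| = t) : (tGraph m n t).Adj x y := by
  refine ⟨fun he => ?_, h⟩
  subst he; simp at h; exact ht (by exact_mod_cast h.symm)

/-- build a vertex from integer coordinates -/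
def mkv (m n : ℕ) (p q : ℤ) (hp : 0 ≤ p) (hp' : p < m) (hq : 0 ≤ q) (hq' : q < n) :
    Fin m × Fin n := (⟨p.toNat, by omega⟩, ⟨q.toNat, by omega⟩)

@[simp] lemma mkv_fst (p q : ℤ) (hp hp' hq hq') :
    ((mkv m n p q hp hp' hq hq').1 : ℤ) = p := by simp [mkv]; omega

@[simp] lemma mkv_snd (p q : ℤ) (hp hp' hq hq') :
    ((mkv m n p q hp hp' hq hq').2 : ℤ) = q := by simp [mkv]; omega

lemma reach_via (ht : t ≠ 0) (v w : Fin m × Fin n) (p q : ℤ)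
    (hp : 0 ≤ p) (hp' : p < m) (hq : 0 ≤ q) (hq' : q < n)
    (h1 : |(v.1 : ℤ) - p| + |(v.2 : ℤ) - q| = t)
    (h2 : |p - (w.1 : ℤ)| + |q - (w.2 : ℤ)| = t) : (tGraph m n t).Reachable v w := by
  refine ((adj_of ht (y := mkv m n p q hp hp' hq hq') ?_).reachable).trans
    ((adj_of ht (x := mkv m n p q hp hp' hq hq') ?_).reachable) <;> simpa

lemma diag_pos (hm : 2 ≤ m) (hn : 2 ≤ n) (ht : 2 ≤ t) (htub : 2 * t ≤ m + n - 1)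
    (v w : Fin m × Fin n) (hK : (w.1 : ℤ) = (v.1 : ℤ) + 1)
    (hL : |(v.2 : ℤ) - (w.2 : ℤ)| = 1) : (tGraph m n t).Reachable v w := by
  have ht0 : t ≠ 0 := by omega
  have hI0 : (0:ℤ) ≤ (v.1 : ℤ) := Int.ofNat_nonneg _
  have hI1 : ((v.1 : ℤ)) < m := by exact_mod_cast v.1.isLt
  have hJ0 : (0:ℤ) ≤ (v.2 : ℤ) := Int.ofNat_nonneg _
  have hJ1 : ((v.2 : ℤ)) < n := by exact_mod_cast v.2.isLt
  have hK1 : ((w.1 : ℤ)) < m := by exact_mod_cast w.1.isLt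
  have hL0 : (0:ℤ) ≤ (w.2 : ℤ) := Int.ofNat_nonneg _
  have hL1 : ((w.2 : ℤ)) < n := by exact_mod_cast w.2.isLt
  have htub' : 2 * (t:ℤ) ≤ (m:ℤ) + n - 1 := by omega
  set I := (v.1 : ℤ); set J := (v.2 : ℤ); set L := (w.2 : ℤ)
  rcases abs_cases (J - L) with ⟨h, _⟩ | ⟨h, _⟩
  · -- L = J - 1
    rcases le_or_gt (t : ℤ) ((m - 1 - I) + (n - 1 - J)) with hc | hc
    · obtain ⟨a, ha1, ha2, ha3, ha4⟩ :
          ∃ a : ℤ, 1 ≤ a ∧ (t:ℤ) - (n - 1 - J) ≤ a ∧ a ≤ t ∧ a ≤ m - 1 - I := by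
        rcases le_total 1 ((t:ℤ) - (n - 1 - J)) with h' | h'
        · exact ⟨(t:ℤ) - (n - 1 - J), by omega, by omega, by omega, by omega⟩
        · exact ⟨1, by omega, by omega, by omega, by omega⟩
      refine reach_via ht0 v w (I + a) (J + t - a) (by omega) (by omega) (by omega) (by omega) ?_ ?_
      · rw [show I - (I + a) = -a by ring, abs_neg, abs_of_nonneg (by omega),
          show J - (J + t - a) = a - t by ring, abs_of_nonpos (by omega)]; ring
      · rw [hK, show I + a - (I + 1) = a - 1 by ring, abs_of_nonneg (by omega),
          show J + t - a - L = t - a + 1 by omega, abs_of_nonneg (by omega)]; ring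
    · obtain ⟨a, ha1, ha2, ha3, ha4⟩ :
          ∃ a : ℤ, 0 ≤ a ∧ a ≤ I ∧ a ≤ (t:ℤ) - 1 ∧ (t:ℤ) - J ≤ a := by
        rcases le_total I ((t:ℤ) - 1) with h' | h'
        · exact ⟨I, by omega, by omega, by omega, by omega⟩
        · exact ⟨(t:ℤ) - 1, by omega, by omega, by omega, by omega⟩
      refine reach_via ht0 v w (I - a) (J - t + a) (by omega) (by omega) (by omega) (by omega) ?_ ?_
      · rw [show I - (I - a) = a by ring, abs_of_nonneg (by omega),
          show J - (J - t + a) = t - a by ring, abs_of_nonneg (by omega)]; ring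
      · rw [hK, show I - a - (I + 1) = -(a + 1) by ring, abs_neg, abs_of_nonneg (by omega),
          show J - t + a - L = a + 1 - t by omega, abs_of_nonpos (by omega)]; ring
  · -- L = J + 1
    rcases le_or_gt (t : ℤ) ((m - 1 - I) + J) with hc | hc
    · obtain ⟨a, ha1, ha2, ha3, ha4⟩ :
          ∃ a : ℤ, 1 ≤ a ∧ (t:ℤ) - J ≤ a ∧ a ≤ t ∧ a ≤ m - 1 - I := by
        rcases le_total 1 ((t:ℤ) - J) with h' | h'
        · exact ⟨(t:ℤ) - J, by omega, by omega, by omega, by omega⟩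
        · exact ⟨1, by omega, by omega, by omega, by omega⟩
      refine reach_via ht0 v w (I + a) (J + a - t) (by omega) (by omega) (by omega) (by omega) ?_ ?_
      · rw [show I - (I + a) = -a by ring, abs_neg, abs_of_nonneg (by omega),
          show J - (J + a - t) = t - a by ring, abs_of_nonneg (by omega)]; ring
      · rw [hK, show I + a - (I + 1) = a - 1 by ring, abs_of_nonneg (by omega),
          show J + a - t - L = a - t - 1 by omega, abs_of_nonpos (by omega)]; ring
    · obtain ⟨a, ha1, ha2, ha3, ha4⟩ :
          ∃ a : ℤ, a ≤ 0 ∧ a ≤ (n:ℤ) - 1 - J - t ∧ 1 - (t:ℤ) ≤ a ∧ -I ≤ a := by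
        rcases le_total 0 ((n:ℤ) - 1 - J - t) with h' | h'
        · exact ⟨0, by omega, by omega, by omega, by omega⟩
        · exact ⟨(n:ℤ) - 1 - J - t, by omega, by omega, by omega, by omega⟩
      refine reach_via ht0 v w (I + a) (J + t + a) (by omega) (by omega) (by omega) (by omega) ?_ ?_
      · rw [show I - (I + a) = -a by ring, abs_neg, abs_of_nonpos (by omega),
          show J - (J + t + a) = -(t + a) by ring, abs_neg, abs_of_nonneg (by omega)]; ring
      · rw [hK, show I + a - (I + 1) = a - 1 by ring, abs_of_nonpos (by omega),
          show J + t + a - L = t + a - 1 by omega, abs_of_nonneg (by omega)]; ring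

lemma diag (hm : 2 ≤ m) (hn : 2 ≤ n) (ht : 2 ≤ t) (htub : 2 * t ≤ m + n - 1)
    (v w : Fin m × Fin n) (hK : |(v.1 : ℤ) - (w.1 : ℤ)| = 1)
    (hL : |(v.2 : ℤ) - (w.2 : ℤ)| = 1) : (tGraph m n t).Reachable v w := by
  rcases abs_cases ((v.1:ℤ) - w.1) with ⟨h, _⟩ | ⟨h, _⟩
  · exact (diag_pos hm hn ht htub w v (by omega) (by rw [abs_sub_comm]; exact hL)).symm
  · exact diag_pos hm hn ht htub v w (by omega) hL

lemma diagN (hm : 2 ≤ m) (hn : 2 ≤ n) (ht : 2 ≤ t) (htub : 2 * t ≤ m + n - 1)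
    (v w : Fin m × Fin n)
    (h1 : w.1.val + 1 = v.1.val ∨ v.1.val + 1 = w.1.val)
    (h2 : w.2.val + 1 = v.2.val ∨ v.2.val + 1 = w.2.val) : (tGraph m n t).Reachable v w := by
  apply diag hm hn ht htub
  · have : (v.1:ℤ) - (w.1:ℤ) = 1 ∨ (v.1:ℤ) - (w.1:ℤ) = -1 := by omega
    rcases this with h | h <;> rw [h] <;> norm_num
  · have : (v.2:ℤ) - (w.2:ℤ) = 1 ∨ (v.2:ℤ) - (w.2:ℤ) = -1 := by omega
    rcases this with h | h <;> rw [h] <;> norm_num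

lemma reach_canon (hm : 2 ≤ m) (hn : 2 ≤ n) (ht : 2 ≤ t) (htub : 2 * t ≤ m + n - 1) :
    ∀ N (v : Fin m × Fin n), v.1.val + v.2.val ≤ N →
      (tGraph m n t).Reachable v (⟨0, by omega⟩, ⟨0, by omega⟩) ∨
      (tGraph m n t).Reachable v (⟨0, by omega⟩, ⟨1, by omega⟩) := by
  intro N
  induction N with
  | zero =>
    intro v hv
    left
    have hv1 : v = (⟨0, by omega⟩, ⟨0, by omega⟩) :=
      Prod.ext (Fin.ext (show v.1.val = 0 by omega)) (Fin.ext (show v.2.val = 0 by omega))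
    rw [hv1]
  | succ N ih =>
    intro v hv
    rcases Nat.eq_zero_or_pos v.1.val with hi | hi <;>
      rcases Nat.eq_zero_or_pos v.2.val with hj | hj
    · left
      have hv1 : v = (⟨0, by omega⟩, ⟨0, by omega⟩) :=
        Prod.ext (Fin.ext (show v.1.val = 0 by omega)) (Fin.ext (show v.2.val = 0 by omega))
      rw [hv1]
    · -- i = 0, j ≥ 1
      rcases Nat.lt_or_ge v.2.val 2 with hj2 | hj2
      · right
        have hv1 : v = (⟨0, by omega⟩, ⟨1, by omega⟩) :=
          Prod.ext (Fin.ext (show v.1.val = 0 by omega)) (Fin.ext (show v.2.val = 1 by omega))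
        rw [hv1]
      · have h2n : 2 ≤ v.2.val := hj2
        refine ?_
        set w1 : Fin m × Fin n := (⟨1, by omega⟩, ⟨v.2.val - 1, by omega⟩) with hw1
        set w2 : Fin m × Fin n := (⟨0, by omega⟩, ⟨v.2.val - 2, by omega⟩) with hw2
        have r1 : (tGraph m n t).Reachable v w1 :=
          diagN hm hn ht htub v w1 (Or.inr (show v.1.val + 1 = 1 by omega))
            (Or.inl (show v.2.val - 1 + 1 = v.2.val by omega))
        have r2 : (tGraph m n t).Reachable w1 w2 :=
          diagN hm hn ht htub w1 w2 (Or.inl (show 0 + 1 = 1 by omega))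
            (Or.inl (show v.2.val - 2 + 1 = v.2.val - 1 by omega))
        rcases ih w2 (show 0 + (v.2.val - 2) ≤ N by omega) with h | h
        · exact Or.inl ((r1.trans r2).trans h)
        · exact Or.inr ((r1.trans r2).trans h)
    · -- i ≥ 1, j = 0
      rcases Nat.lt_or_ge v.1.val 2 with hi2 | hi2
      · right
        exact diagN hm hn ht htub v _ (Or.inl (show 0 + 1 = v.1.val by omega))
          (Or.inr (show v.2.val + 1 = 1 by omega))
      · set w1 : Fin m × Fin n := (⟨v.1.val - 1, by omega⟩, ⟨1, by omega⟩) with hw1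
        set w2 : Fin m × Fin n := (⟨v.1.val - 2, by omega⟩, ⟨0, by omega⟩) with hw2
        have r1 : (tGraph m n t).Reachable v w1 :=
          diagN hm hn ht htub v w1 (Or.inl (show v.1.val - 1 + 1 = v.1.val by omega))
            (Or.inr (show v.2.val + 1 = 1 by omega))
        have r2 : (tGraph m n t).Reachable w1 w2 :=
          diagN hm hn ht htub w1 w2 (Or.inl (show v.1.val - 2 + 1 = v.1.val - 1 by omega))
            (Or.inl (show 0 + 1 = 1 by omega))
        rcases ih w2 (show v.1.val - 2 + 0 ≤ N by omega) with h | h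
        · exact Or.inl ((r1.trans r2).trans h)
        · exact Or.inr ((r1.trans r2).trans h)
    · -- i ≥ 1, j ≥ 1
      set w : Fin m × Fin n := (⟨v.1.val - 1, by omega⟩, ⟨v.2.val - 1, by omega⟩) with hw
      have r1 : (tGraph m n t).Reachable v w :=
        diagN hm hn ht htub v w (Or.inl (show v.1.val - 1 + 1 = v.1.val by omega))
          (Or.inl (show v.2.val - 1 + 1 = v.2.val by omega))
      rcases ih w (show v.1.val - 1 + (v.2.val - 1) ≤ N by omega) with h | h
      · exact Or.inl (r1.trans h)
      · exact Or.inr (r1.trans h)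

lemma parity_adj (hteven : Even t) {x y : Fin m × Fin n} (h : (tGraph m n t).Adj x y) :
    (x.1.val + x.2.val) % 2 = (y.1.val + y.2.val) % 2 := by
  obtain ⟨-, h⟩ := h
  obtain ⟨k, hk⟩ := hteven
  subst hk
  push_cast at h
  rcases abs_cases ((x.1:ℤ) - (y.1:ℤ)) with ⟨h1, _⟩ | ⟨h1, _⟩ <;>
    rcases abs_cases ((x.2:ℤ) - (y.2:ℤ)) with ⟨h2, _⟩ | ⟨h2, _⟩ <;>
    rw [h1, h2] at h <;> omega

lemma parity_reach (hteven : Even t) {x y : Fin m × Fin n}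
    (h : (tGraph m n t).Reachable x y) :
    (x.1.val + x.2.val) % 2 = (y.1.val + y.2.val) % 2 := by
  obtain ⟨p⟩ := h
  induction p with
  | nil => rfl
  | cons h _ ih => exact (parity_adj hteven h).trans ih

end TGaux

/-- For `m, n ≥ 2` and even `t` with `2 ≤ t ≤ ⌈(m + n - 2)/2⌉`, the `t`-graph `Γ(m,n,t)`
has exactly 2 connected components. -/
theorem tGraph_even_two_components (m n t : ℕ) (hm : 2 ≤ m) (hn : 2 ≤ n) (hteven : Even t)
    (ht : 2 ≤ t) (htub : t ≤ (m + n - 2 + 1) / 2) :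
    Fintype.card (tGraph m n t).ConnectedComponent = 2 := by
  have htub2 : 2 * t ≤ m + n - 1 := by omega
  rw [← Nat.card_eq_fintype_card, Nat.card_eq_two_iff]
  refine ⟨(tGraph m n t).connectedComponentMk (⟨0, by omega⟩, ⟨0, by omega⟩),
    (tGraph m n t).connectedComponentMk (⟨0, by omega⟩, ⟨1, by omega⟩),
    fun he => ?_, ?_⟩
  · have hr := SimpleGraph.ConnectedComponent.exact he
    have := TGaux.parity_reach hteven hr
    simp at this
  · ext c
    simp only [Set.mem_insert_iff, Set.mem_singleton_iff, Set.mem_univ, iff_true]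
    induction c using SimpleGraph.ConnectedComponent.ind with
    | _ v =>
      rcases TGaux.reach_canon hm hn ht htub2 (v.1.val + v.2.val) v le_rfl with h | h
      · exact Or.inl (SimpleGraph.ConnectedComponent.sound h)
      · exact Or.inr (SimpleGraph.ConnectedComponent.sound h)
end

section
/- Let m, n ≥ 2 and let t be an odd number with 1 ≤ t ≤ ⌈(m+n−2)/2⌉. Then the t-graph Γ(m,n,t) is connected. -/
def vtx (m n : ℕ) (i j : ℕ) (hi : i < m) (hj : j < n) : Fin m × Fin n := (⟨i,hi⟩,⟨j,hj⟩)

lemma vtx_congr {m n : ℕ} {i j i' j' : ℕ} (h1 : i = i') (h2 : j = j')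
    (hi : i < m) (hj : j < n) (hi' : i' < m) (hj' : j' < n) :
    vtx m n i j hi hj = vtx m n i' j' hi' hj' := by subst h1; subst h2; rfl

lemma adj_vtx {m n t : ℕ} {i j k l a b : ℕ} (hi : i < m) (hj : j < n) (hk : k < m)
    (hl : l < n) (hab : a + b = t) (ht : 1 ≤ t)
    (h1 : i + a = k ∨ k + a = i) (h2 : j + b = l ∨ l + b = j) :
    (tGraph m n t).Adj (vtx m n i j hi hj) (vtx m n k l hk hl) := by
  refine ⟨?_, ?_⟩
  · intro h
    simp only [vtx, Prod.ext_iff, Fin.ext_iff] at h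
    omega
  · have e1 : |(i:ℤ) - (k:ℤ)| = (a:ℤ) := by
      rw [abs_eq (Int.natCast_nonneg a)]; omega
    have e2 : |(j:ℤ) - (l:ℤ)| = (b:ℤ) := by
      rw [abs_eq (Int.natCast_nonneg b)]; omega
    show |(i:ℤ) - (k:ℤ)| + |(j:ℤ) - (l:ℤ)| = (t:ℤ)
    rw [e1, e2]; omega

section Tight

variable {m n t : ℕ} (hm : 2 ≤ m) (hmt : m ≤ t) (heq : m + n = 2*t+1)

include hm hmt heq

lemma tight_desc : ∀ j, m + j ≤ t → ∀ i (hi : i < m) (hj : j < n),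
    ∃ i0, ∃ (hi0 : i0 < m), i0 % 2 = (i + j) % 2 ∧
      (tGraph m n t).Reachable (vtx m n i j hi hj) (vtx m n i0 0 hi0 (by omega)) := by
  intro j
  induction j with
  | zero =>
    intro _ i hi hj
    exact ⟨i, hi, by omega, by exact SimpleGraph.Reachable.refl _⟩
  | succ j ih =>
    intro hjt i hi hj
    set i' := if i = 0 then 1 else i - 1 with hi'def
    have h01 : i + 1 = i' ∨ i' + 1 = i := by unfold i'; split <;> omega
    have hi' : i' < m := by unfold i'; split <;> omega
    have hjt' : j + t < n := by omega
    have hjn : j < n := by omega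
    have a1 : (tGraph m n t).Adj (vtx m n i (j+1) hi hj) (vtx m n i' (j+t) hi' hjt') :=
      adj_vtx hi hj hi' hjt' (a := 1) (b := t - 1) (by omega) (by omega) h01 (by omega)
    have a2 : (tGraph m n t).Adj (vtx m n i' (j+t) hi' hjt') (vtx m n i' j hi' hjn) :=
      adj_vtx hi' hjt' hi' hjn (a := 0) (b := t) (by omega) (by omega) (by omega) (by omega)
    obtain ⟨i0, hi0, hpar, hr⟩ := ih (by omega) i' hi' hjn
    exact ⟨i0, hi0, by omega, (a1.reachable.trans a2.reachable).trans hr⟩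

lemma tight_chain : ∀ i (hi : i < m),
    (tGraph m n t).Reachable (vtx m n i 0 hi (by omega)) (vtx m n (i % 2) 0 (by omega) (by omega)) := by
  intro i
  induction i using Nat.strong_induction_on with
  | _ i ihh =>
    intro hi
    by_cases h2 : i < 2
    · have hv := vtx_congr (show i = i % 2 by omega) rfl hi
        (show (0:ℕ) < n by omega) (show i % 2 < m by omega) (show (0:ℕ) < n by omega)
      rw [← hv]
    · have hi2 : i - 2 < m := by omega
      have htn : t < n := by omega
      have h1n : 1 < n := by omega
      have a1 : (tGraph m n t).Adj (vtx m n i 0 hi (by omega)) (vtx m n i t hi htn) :=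
        adj_vtx _ _ _ _ (a := 0) (b := t) (by omega) (by omega) (by omega) (by omega)
      have a2 : (tGraph m n t).Adj (vtx m n i t hi htn) (vtx m n (i-1) 1 (by omega) h1n) :=
        adj_vtx _ _ _ _ (a := 1) (b := t - 1) (by omega) (by omega) (by omega) (by omega)
      have a3 : (tGraph m n t).Adj (vtx m n (i-1) 1 (by omega) h1n) (vtx m n (i-2) t hi2 htn) :=
        adj_vtx _ _ _ _ (a := 1) (b := t - 1) (by omega) (by omega) (by omega) (by omega)
      have a4 : (tGraph m n t).Adj (vtx m n (i-2) t hi2 htn) (vtx m n (i-2) 0 hi2 (by omega)) :=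
        adj_vtx _ _ _ _ (a := 0) (b := t) (by omega) (by omega) (by omega) (by omega)
      have hrest := ihh (i-2) (by omega) hi2
      have hmod : (i-2) % 2 = i % 2 := by omega
      rw [vtx_congr hmod rfl (by omega) (by omega) (by omega) (by omega)] at hrest
      exact (((a1.reachable.trans a2.reachable).trans a3.reachable).trans a4.reachable).trans hrest

lemma tight_all : ∀ i j (hi : i < m) (hj : j < n),
    ∃ i0, ∃ (hi0 : i0 < m),
      (tGraph m n t).Reachable (vtx m n i j hi hj) (vtx m n i0 0 hi0 (by omega)) := by
  intro i j hi hj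
  rcases le_or_gt (m + j) t with hlow | hband
  · obtain ⟨i0, hi0, _, hr⟩ := tight_desc hm hmt heq j hlow i hi hj
    exact ⟨i0, hi0, hr⟩
  rcases le_or_gt t j with hhigh | hjt
  · -- j ≥ t : move down by t, then descend
    have hjt' : j - t < n := by omega
    have a1 : (tGraph m n t).Adj (vtx m n i j hi hj) (vtx m n i (j-t) hi hjt') :=
      adj_vtx _ _ _ _ (a := 0) (b := t) (by omega) (by omega) (by omega) (by omega)
    obtain ⟨i0, hi0, _, hr⟩ := tight_desc hm hmt heq (j-t) (by omega) i hi hjt'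
    exact ⟨i0, hi0, a1.reachable.trans hr⟩
  · -- band : t - m + 1 ≤ j ≤ t - 1
    rcases le_or_gt (t - j) i with hge | hlt
    · -- jump straight to row 0
      have hk : i - (t - j) < m := by omega
      have a1 : (tGraph m n t).Adj (vtx m n i j hi hj) (vtx m n (i-(t-j)) 0 hk (by omega)) :=
        adj_vtx _ _ _ _ (a := t - j) (b := j) (by omega) (by omega) (by omega) (by omega)
      exact ⟨i - (t - j), hk, a1.reachable⟩
    · -- jump to top row, then down t, then descend
      have hk : i + (m - (t - j)) < m := by omega
      have htop : n - 1 < n := by omega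
      have a1 : (tGraph m n t).Adj (vtx m n i j hi hj)
          (vtx m n (i + (m - (t-j))) (n-1) hk htop) :=
        adj_vtx _ _ _ _ (a := m - (t-j)) (b := n - 1 - j) (by omega) (by omega)
          (by omega) (by omega)
      have hlm : t - m < n := by omega
      have a2 : (tGraph m n t).Adj (vtx m n (i + (m - (t-j))) (n-1) hk htop)
          (vtx m n (i + (m - (t-j))) (t-m) hk hlm) :=
        adj_vtx _ _ _ _ (a := 0) (b := t) (by omega) (by omega) (by omega) (by omega)
      obtain ⟨i0, hi0, _, hr⟩ := tight_desc hm hmt heq (t-m) (by omega) _ hk hlm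
      exact ⟨i0, hi0, (a1.reachable.trans a2.reachable).trans hr⟩

lemma tight_bridge (hodd : Odd t) : ∃ i0, ∃ (hi0 : i0 < m), i0 % 2 = 1 ∧
    (tGraph m n t).Reachable (vtx m n 0 0 (by omega) (by omega)) (vtx m n i0 0 hi0 (by omega)) := by
  have h1m : m - 1 < m := by omega
  have h2m : m - 2 < m := by omega
  have hb1 : t - m + 1 < n := by omega
  have htop : n - 1 < n := by omega
  have hlm : t - m < n := by omega
  have a1 : (tGraph m n t).Adj (vtx m n 0 0 (by omega) (by omega))
      (vtx m n (m-1) (t-m+1) h1m hb1) :=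
    adj_vtx _ _ _ _ (a := m - 1) (b := t - m + 1) (by omega) (by omega) (by omega) (by omega)
  have a2 : (tGraph m n t).Adj (vtx m n (m-1) (t-m+1) h1m hb1)
      (vtx m n (m-2) (n-1) h2m htop) :=
    adj_vtx _ _ _ _ (a := 1) (b := t - 1) (by omega) (by omega) (by omega) (by omega)
  have a3 : (tGraph m n t).Adj (vtx m n (m-2) (n-1) h2m htop)
      (vtx m n (m-2) (t-m) h2m hlm) :=
    adj_vtx _ _ _ _ (a := 0) (b := t) (by omega) (by omega) (by omega) (by omega)
  obtain ⟨i0, hi0, hpar, hr⟩ := tight_desc hm hmt heq (t-m) (by omega) (m-2) h2m hlm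
  refine ⟨i0, hi0, ?_, ((a1.reachable.trans a2.reachable).trans a3.reachable).trans hr⟩
  obtain ⟨c, hc⟩ := hodd
  omega

lemma tight_conn (hodd : Odd t) : (tGraph m n t).Connected := by
  have h0n : 0 < n := by omega
  have h0m : 0 < m := by omega
  have h1m : 1 < m := by omega
  have key : ∀ v, (tGraph m n t).Reachable v (vtx m n 0 0 h0m h0n) := by
    rintro ⟨⟨i, hi⟩, ⟨j, hj⟩⟩
    obtain ⟨i0, hi0, hr⟩ := tight_all hm hmt heq i j hi hj
    have hchain := tight_chain hm hmt heq i0 hi0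
    rcases Nat.mod_two_eq_zero_or_one i0 with hp | hp
    · have hv := vtx_congr hp rfl (show i0 % 2 < m by omega) h0n h0m h0n
      exact hr.trans (hv ▸ hchain)
    · obtain ⟨i1, hi1, hp1, hbr⟩ := tight_bridge hm hmt heq hodd
      have hchain1 := tight_chain hm hmt heq i1 hi1
      have hv : vtx m n (i0 % 2) 0 (by omega) (by omega) = vtx m n (i1 % 2) 0 (by omega) (by omega) :=
        vtx_congr (by omega) rfl _ _ _ _
      exact hr.trans ((hchain.trans (hv ▸ hchain1.symm)).trans hbr.symm)
  have : Nonempty (Fin m × Fin n) := ⟨vtx m n 0 0 h0m h0n⟩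
  exact ⟨fun u v => (key u).trans (key v).symm⟩

end Tight

def swapHom (m n t : ℕ) : tGraph m n t →g tGraph n m t where
  toFun v := (v.2, v.1)
  map_rel' := by
    rintro ⟨a,b⟩ ⟨c,d⟩ ⟨h1, h2⟩
    refine ⟨?_, ?_⟩
    · intro h; apply h1; simp only [Prod.ext_iff] at h ⊢; exact ⟨h.2, h.1⟩
    · dsimp at h2 ⊢; linarith

lemma swap_conn {m n t : ℕ} (h : (tGraph m n t).Connected) : (tGraph n m t).Connected :=
  h.map (swapHom m n t) (fun v => ⟨(v.2, v.1), rfl⟩)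

def colHom (m n t : ℕ) (hn : 1 ≤ n) : tGraph m (n-1) t →g tGraph m n t where
  toFun v := (v.1, ⟨v.2.1, by omega⟩)
  map_rel' := by
    rintro ⟨a,b⟩ ⟨c,d⟩ ⟨h1, h2⟩
    refine ⟨?_, ?_⟩
    · intro h; apply h1
      simp only [Prod.ext_iff, Fin.ext_iff] at h ⊢
      exact h
    · exact h2

lemma extend (m n t : ℕ) (hm : 2 ≤ m) (hn : 3 ≤ n) (ht : 1 ≤ t) (h2 : 2*t + 2 ≤ m + n)
    (hconn : (tGraph m (n-1) t).Connected) : (tGraph m n t).Connected := by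
  have hn1 : 1 ≤ n := by omega
  set f := colHom m n t hn1 with hf
  have key : ∀ v : Fin m × Fin n, ∃ w, (tGraph m n t).Reachable v (f w) := by
    rintro ⟨⟨i, hi⟩, ⟨j, hj⟩⟩
    by_cases hsub : j < n - 1
    · exact ⟨(⟨i, hi⟩, ⟨j, hsub⟩), SimpleGraph.Reachable.refl _⟩
    · have hj' : j = n - 1 := by omega
      subst hj'
      rcases le_or_gt t (n-1) with hc | hc
      · refine ⟨(⟨i, hi⟩, ⟨n-1-t, by omega⟩), SimpleGraph.Adj.reachable ?_⟩
        exact adj_vtx (t := t) hi hj hi (show n-1-t < n by omega) (a := 0) (b := t)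
          (by omega) (by omega) (by omega) (by omega)
      · rcases le_or_gt (t-(n-1)) i with hge | hlt
        · refine ⟨(⟨i-(t-(n-1)), by omega⟩, ⟨0, by omega⟩), SimpleGraph.Adj.reachable ?_⟩
          exact adj_vtx (t := t) hi hj (show i-(t-(n-1)) < m by omega) (show 0 < n by omega)
            (a := t-(n-1)) (b := n-1) (by omega) (by omega) (by omega) (by omega)
        · refine ⟨(⟨i+(t-(n-1)), by omega⟩, ⟨0, by omega⟩), SimpleGraph.Adj.reachable ?_⟩
          exact adj_vtx (t := t) hi hj (show i+(t-(n-1)) < m by omega) (show 0 < n by omega)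
            (a := t-(n-1)) (b := n-1) (by omega) (by omega) (by omega) (by omega)
  have : Nonempty (Fin m × Fin n) := ⟨(⟨0, by omega⟩, ⟨0, by omega⟩)⟩
  refine ⟨fun x y => ?_⟩
  obtain ⟨wx, hx⟩ := key x
  obtain ⟨wy, hy⟩ := key y
  exact hx.trans (((hconn.preconnected wx wy).map f).trans hy.symm)

lemma base22 : (tGraph 2 2 1).Connected := by
  have h02 : (0:ℕ) < 2 := by omega
  have h12 : (1:ℕ) < 2 := by omega
  have key : ∀ v, (tGraph 2 2 1).Reachable v (vtx 2 2 0 0 h02 h02) := by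
    rintro ⟨⟨i, hi⟩, ⟨j, hj⟩⟩
    interval_cases i <;> interval_cases j
    · exact SimpleGraph.Reachable.refl _
    · exact (adj_vtx (t := 1) h02 h12 h02 h02 (a := 0) (b := 1) (by omega) (by omega)
        (by omega) (by omega)).reachable
    · exact (adj_vtx (t := 1) h12 h02 h02 h02 (a := 1) (b := 0) (by omega) (by omega)
        (by omega) (by omega)).reachable
    · refine ((adj_vtx (t := 1) h12 h12 h02 h12 (a := 1) (b := 0) (by omega) (by omega)
        (by omega) (by omega)).reachable).trans ?_
      exact (adj_vtx (t := 1) h02 h12 h02 h02 (a := 0) (b := 1) (by omega) (by omega)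
        (by omega) (by omega)).reachable
  have : Nonempty (Fin 2 × Fin 2) := ⟨vtx 2 2 0 0 h02 h02⟩
  exact ⟨fun u v => (key u).trans (key v).symm⟩

lemma main_conn : ∀ k m n t, m + n ≤ k → 2 ≤ m → 2 ≤ n → Odd t → 2*t ≤ m + n - 1 →
    (tGraph m n t).Connected := by
  intro k
  induction k with
  | zero => intro m n t hk hm hn _ _; omega
  | succ k ih =>
    intro m n t hk hm hn hodd hub
    have ht1 : 1 ≤ t := by obtain ⟨c, hc⟩ := hodd; omega
    by_cases htight : m + n = 2*t+1
    · rcases le_total m n with hmn | hnm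
      · exact tight_conn hm (by omega) htight hodd
      · exact swap_conn (tight_conn hn (by omega) (by omega) hodd)
    · have hloose : 2*t + 2 ≤ m + n := by omega
      by_cases hn3 : 3 ≤ n
      · exact extend m n t hm hn3 ht1 hloose
          (ih m (n-1) t (by omega) hm (by omega) hodd (by omega))
      · have hn2 : n = 2 := by omega
        subst hn2
        by_cases hm3 : 3 ≤ m
        · apply swap_conn
          apply extend 2 m t (le_refl 2) hm3 ht1 (by omega)
          apply swap_conn
          exact ih (m-1) 2 t (by omega) (by omega) (by omega) hodd (by omega)
        · have hm2 : m = 2 := by omega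
          have ht' : t = 1 := by obtain ⟨c, hc⟩ := hodd; omega
          subst hm2; subst ht'
          exact base22

/-- For `m, n ≥ 2` and odd `t` with `1 ≤ t ≤ ⌈(m + n - 2)/2⌉`, the `t`-graph `Γ(m,n,t)`
is connected. -/
theorem tGraph_odd_connected (m n t : ℕ) (hm : 2 ≤ m) (hn : 2 ≤ n) (htodd : Odd t)
    (ht : 1 ≤ t) (htub : t ≤ (m + n - 2 + 1) / 2) :
    (tGraph m n t).Connected := by
  exact main_conn (m+n) m n t (le_refl _) hm hn htodd (by omega)
end

section
/- For every n ≥ 2 and every t with 2 ≤ t ≤ n, the t-graph Γ(2,n,t) of the dihedral group D_n has exactly 4(n − t) + 2 edges. -/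
open Finset

lemma cnt1 (n d : ℕ) (hdn : d ≤ n) :
    ((Finset.univ : Finset (Fin n × Fin n)).filter
      fun r => (r.1 : ℤ) - (r.2 : ℤ) = d).card = n - d := by
  have hcard : ((Finset.univ : Finset (Fin n × Fin n)).filter
      fun r => (r.1 : ℤ) - (r.2 : ℤ) = d)
      = Finset.image (fun l : Fin (n - d) =>
        ((⟨l.val + d, by have := l.isLt; omega⟩ : Fin n),
         (⟨l.val, by have := l.isLt; omega⟩ : Fin n))) Finset.univ := by
    ext r
    simp only [Finset.mem_filter, Finset.mem_univ, true_and, Finset.mem_image]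
    constructor
    · intro h
      have h1 : r.1.val = r.2.val + d := by
        have := r.1.isLt; have := r.2.isLt; omega
      have h2 : r.2.val < n - d := by have := r.1.isLt; omega
      refine ⟨⟨r.2.val, h2⟩, ?_⟩
      ext <;> simp [h1]
    · rintro ⟨l, rfl⟩
      push_cast
      ring
  rw [hcard, Finset.card_image_of_injective _ ?_, Finset.card_univ, Fintype.card_fin]
  intro a b hab
  simpa [Fin.ext_iff, Prod.ext_iff] using hab

lemma cnt2 (n d : ℕ) (hdn : d ≤ n) :
    ((Finset.univ : Finset (Fin n × Fin n)).filter
      fun r => (r.2 : ℤ) - (r.1 : ℤ) = d).card = n - d := by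
  rw [← cnt1 n d hdn]
  apply Finset.card_nbij' Prod.swap Prod.swap <;> simp [Prod.swap, Set.MapsTo, Set.LeftInvOn, Set.RightInvOn]

lemma cntAbs (n d : ℕ) (hd : 1 ≤ d) (hdn : d ≤ n) :
    ((Finset.univ : Finset (Fin n × Fin n)).filter
      fun r => |(r.1 : ℤ) - (r.2 : ℤ)| = d).card = 2 * (n - d) := by
  have hsplit : ((Finset.univ : Finset (Fin n × Fin n)).filter
      fun r => |(r.1 : ℤ) - (r.2 : ℤ)| = d)
      = ((Finset.univ : Finset (Fin n × Fin n)).filter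
          fun r => (r.1 : ℤ) - (r.2 : ℤ) = d)
        ∪ ((Finset.univ : Finset (Fin n × Fin n)).filter
          fun r => (r.2 : ℤ) - (r.1 : ℤ) = d) := by
    ext r
    simp only [Finset.mem_filter, Finset.mem_union, Finset.mem_univ, true_and]
    rw [abs_eq (by positivity)]
    omega
  rw [hsplit, Finset.card_union_of_disjoint, cnt1 n d hdn, cnt2 n d hdn]
  · ring
  · rw [Finset.disjoint_filter]
    intro r _ h1 h2
    omega

lemma fiberCount (n t : ℕ)
    (S : Finset ((Fin 2 × Fin n) × (Fin 2 × Fin n)))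
    (hS : S = Finset.univ.filter fun p =>
      |(p.1.1 : ℤ) - (p.2.1 : ℤ)| + |(p.1.2 : ℤ) - (p.2.2 : ℤ)| = t)
    (q : Fin 2 × Fin 2) :
    (S.filter fun p => (p.1.1, p.2.1) = q).card
      = ((Finset.univ : Finset (Fin n × Fin n)).filter
          fun r => |(q.1 : ℤ) - (q.2 : ℤ)| + |(r.1 : ℤ) - (r.2 : ℤ)| = t).card := by
  subst hS
  apply Finset.card_nbij' (fun p => (p.1.2, p.2.2)) (fun r => ((q.1, r.1), (q.2, r.2)))
  · intro p hp
    simp only [Finset.mem_coe, Finset.mem_filter, Finset.mem_univ, true_and] at hp ⊢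
    obtain ⟨h1, h2⟩ := hp
    subst h2
    exact h1
  · intro r hr
    simp only [Finset.mem_coe, Finset.mem_filter, Finset.mem_univ, true_and] at hr ⊢
    exact ⟨hr, by simp⟩
  · intro p hp
    simp only [Finset.mem_coe, Finset.mem_filter, Finset.mem_univ, true_and] at hp
    obtain ⟨-, h2⟩ := hp
    subst h2
    rfl
  · intro r _
    rfl

/-- For `n ≥ 2` and `2 ≤ t ≤ n`, the `t`-graph `Γ(2,n,t)` of the dihedral group `D_n` has
exactly `4(n - t) + 2` edges. -/
theorem dihedral_tGraph_card_edges (n t : ℕ) (hn : 2 ≤ n) (ht : 2 ≤ t) (htn : t ≤ n) :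
    (tGraph 2 n t).edgeFinset.card = 4 * (n - t) + 2 := by
  have key : 2 * (tGraph 2 n t).edgeFinset.card = 8 * (n - t) + 4 := by
    rw [SimpleGraph.two_mul_card_edgeFinset]
    set S : Finset ((Fin 2 × Fin n) × (Fin 2 × Fin n)) :=
      Finset.univ.filter fun p =>
        |(p.1.1 : ℤ) - (p.2.1 : ℤ)| + |(p.1.2 : ℤ) - (p.2.2 : ℤ)| = t with hSdef
    have hfilt : (Finset.univ.filter fun (x, y) => (tGraph 2 n t).Adj x y) = S := by
      rw [hSdef]
      apply Finset.filter_congr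
      rintro ⟨x, y⟩ -
      constructor
      · exact fun h => h.2
      · intro h
        refine ⟨?_, h⟩
        rintro rfl
        simp at h
        omega
    rw [hfilt]
    rw [Finset.card_eq_sum_card_fiberwise
      (f := fun p : (Fin 2 × Fin n) × (Fin 2 × Fin n) => (p.1.1, p.2.1))
      (t := (Finset.univ : Finset (Fin 2 × Fin 2))) (fun _ _ => Finset.mem_univ _)]
    have hfib : ∀ q : Fin 2 × Fin 2,
        (S.filter fun p => (p.1.1, p.2.1) = q).card
          = ((Finset.univ : Finset (Fin n × Fin n)).filter
              fun r => |(q.1 : ℤ) - (q.2 : ℤ)| + |(r.1 : ℤ) - (r.2 : ℤ)| = t).card :=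
      fiberCount n t S hSdef
    simp only [hfib]
    rw [Fintype.sum_prod_type]
    simp only [Fin.sum_univ_two]
    have e00 : ((Finset.univ : Finset (Fin n × Fin n)).filter
        fun r => |((0 : Fin 2) : ℤ) - ((0 : Fin 2) : ℤ)| + |(r.1 : ℤ) - (r.2 : ℤ)| = t).card
        = 2 * (n - t) := by
      rw [← cntAbs n t (by omega) htn]
      refine congrArg Finset.card (Finset.filter_congr ?_)
      intro r _
      have h0 : |(((0 : Fin 2) : ℕ) : ℤ) - (((0 : Fin 2) : ℕ) : ℤ)| = 0 := by decide
      rw [h0]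
      generalize |(r.1 : ℤ) - (r.2 : ℤ)| = y
      omega
    have e11 : ((Finset.univ : Finset (Fin n × Fin n)).filter
        fun r => |((1 : Fin 2) : ℤ) - ((1 : Fin 2) : ℤ)| + |(r.1 : ℤ) - (r.2 : ℤ)| = t).card
        = 2 * (n - t) := by
      rw [← cntAbs n t (by omega) htn]
      refine congrArg Finset.card (Finset.filter_congr ?_)
      intro r _
      have h0 : |(((1 : Fin 2) : ℕ) : ℤ) - (((1 : Fin 2) : ℕ) : ℤ)| = 0 := by decide
      rw [h0]
      generalize |(r.1 : ℤ) - (r.2 : ℤ)| = y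
      omega
    have e01 : ((Finset.univ : Finset (Fin n × Fin n)).filter
        fun r => |((0 : Fin 2) : ℤ) - ((1 : Fin 2) : ℤ)| + |(r.1 : ℤ) - (r.2 : ℤ)| = t).card
        = 2 * (n - (t - 1)) := by
      rw [← cntAbs n (t - 1) (by omega) (by omega)]
      refine congrArg Finset.card (Finset.filter_congr ?_)
      intro r _
      have h0 : |(((0 : Fin 2) : ℕ) : ℤ) - (((1 : Fin 2) : ℕ) : ℤ)| = 1 := by decide
      rw [h0]
      have hc : ((t - 1 : ℕ) : ℤ) = (t : ℤ) - 1 := by omega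
      rw [hc]
      generalize |(r.1 : ℤ) - (r.2 : ℤ)| = y
      omega
    have e10 : ((Finset.univ : Finset (Fin n × Fin n)).filter
        fun r => |((1 : Fin 2) : ℤ) - ((0 : Fin 2) : ℤ)| + |(r.1 : ℤ) - (r.2 : ℤ)| = t).card
        = 2 * (n - (t - 1)) := by
      rw [← cntAbs n (t - 1) (by omega) (by omega)]
      refine congrArg Finset.card (Finset.filter_congr ?_)
      intro r _
      have h0 : |(((1 : Fin 2) : ℕ) : ℤ) - (((0 : Fin 2) : ℕ) : ℤ)| = 1 := by decide
      rw [h0]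
      have hc : ((t - 1 : ℕ) : ℤ) = (t : ℤ) - 1 := by omega
      rw [hc]
      generalize |(r.1 : ℤ) - (r.2 : ℤ)| = y
      omega
    rw [e00, e01, e10, e11]
    omega
  omega
end

section
/- Let n ≥ 2 and let t be an even number with 2 ≤ t ≤ ⌈n/2⌉. Then the t-graph Γ(2,n,t) of the dihedral group D_n has exactly 2 connected components, and these components are isomorphic: the map (i,j) ↦ (i+1, j) (addition in Fin 2, i.e., swapping the two rows) is a graph automorphism of Γ(2,n,t) that sends every vertex to a vertex lying in the other connected component. -/
open Fin.NatCast in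
/-- parity invariant -/
def myPar {n : ℕ} (v : Fin 2 × Fin n) : Fin 2 := v.1 + (v.2.val : Fin 2)

lemma myPar_adj {n t : ℕ} (hteven : Even t) {v w : Fin 2 × Fin n}
    (h : (tGraph 2 n t).Adj v w) : myPar v = myPar w := by
  obtain ⟨c, hc⟩ := hteven
  obtain ⟨-, h2⟩ := h
  apply Fin.ext
  simp only [myPar, Fin.add_def, Fin.val_natCast]
  rcases abs_cases ((v.1 : ℤ) - (w.1 : ℤ)) with ⟨h4, -⟩ | ⟨h4, -⟩ <;>
    rcases abs_cases ((v.2 : ℤ) - (w.2 : ℤ)) with ⟨h5, -⟩ | ⟨h5, -⟩ <;>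
      rw [h4, h5] at h2 <;> omega

lemma myPar_reach {n t : ℕ} (hteven : Even t) {v w : Fin 2 × Fin n}
    (h : (tGraph 2 n t).Reachable v w) : myPar v = myPar w := by
  obtain ⟨p⟩ := h
  induction p with
  | nil => rfl
  | cons ha _ ih => exact (myPar_adj hteven ha).trans ih

lemma habs2 : ∀ i : Fin 2, |(i:ℤ) - ((i+1 : Fin 2):ℤ)| = 1 := by decide

lemma habsadd : ∀ i k : Fin 2, |((i+1 : Fin 2):ℤ) - ((k+1 : Fin 2):ℤ)| = |(i:ℤ) - (k:ℤ)| := by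
  decide

lemma fin2_inv : ∀ i : Fin 2, i + 1 + 1 = i := by decide

lemma fin2_succ_ne : ∀ i : Fin 2, i + 1 ≠ i := by decide

lemma myAdj {n t : ℕ} {i k : Fin 2} {j l : Fin n}
    (h : |(i:ℤ) - (k:ℤ)| + |(j.val:ℤ) - (l.val:ℤ)| = t) (hne : j.val ≠ l.val) :
    (tGraph 2 n t).Adj (i,j) (k,l) := by
  refine ⟨fun hc => hne ?_, h⟩
  rw [Prod.ext_iff] at hc
  exact congrArg Fin.val hc.2

lemma habs_eq (a b c : ℕ) (h : a = b + c ∨ b = a + c) : |(a:ℤ) - (b:ℤ)| = (c:ℤ) := by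
  rcases h with h | h <;> subst h
  · rw [abs_of_nonneg (by omega)]; omega
  · rw [abs_of_nonpos (by omega)]; omega

lemma reach_base {n t : ℕ} (hn : 3 ≤ n) (hteven : Even t) (ht : 2 ≤ t)
    (htub : 2 * t ≤ n + 1) (z0 : Fin n) (hz0 : z0.val = 0) :
    ∀ (m : ℕ) (j : Fin n), j.val ≤ m → ∀ i : Fin 2,
      (tGraph 2 n t).Reachable (i, j) (myPar (i, j), z0) := by
  have ht1 : t ≤ n - 1 := by omega
  intro m
  induction m with
  | zero =>
    intro j hj i
    have hj0 : j.val = 0 := by omega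
    have h1 : myPar (i, j) = i := by simp [myPar, hj0]
    have h2 : z0 = j := Fin.ext (by omega)
    rw [h1, h2]
  | succ m ih =>
    intro j hj i
    rcases Nat.lt_or_ge j.val 1 with h0 | h0
    · have hj0 : j.val = 0 := by omega
      have h1 : myPar (i, j) = i := by simp [myPar, hj0]
      have h2 : z0 = j := Fin.ext (by omega)
      rw [h1, h2]
    rcases Nat.lt_or_ge j.val t with hlt | hge
    · rcases Nat.lt_or_ge j.val (t-1) with hlt2 | hge2
      · -- 1 ≤ j < t-1 : go across up then within down
        have hb1 : j.val + t - 1 < n := by omega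
        have hb2 : j.val - 1 < n := by omega
        have ha1 : (tGraph 2 n t).Adj (i, j) (i+1, ⟨j.val + t - 1, hb1⟩) := by
          refine myAdj ?_ (show j.val ≠ j.val + t - 1 by omega)
          show |(i:ℤ) - ((i+1 : Fin 2):ℤ)| + |((j.val:ℕ):ℤ) - ((j.val + t - 1 : ℕ):ℤ)| = t
          rw [habs2 i, habs_eq j.val (j.val + t - 1) (t - 1) (Or.inr (by omega))]
          omega
        have ha2 : (tGraph 2 n t).Adj ((i+1 : Fin 2), (⟨j.val + t - 1, hb1⟩ : Fin n))
            (i+1, ⟨j.val - 1, hb2⟩) := by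
          refine myAdj ?_ (show j.val + t - 1 ≠ j.val - 1 by omega)
          show |((i+1 : Fin 2):ℤ) - ((i+1 : Fin 2):ℤ)| +
            |((j.val + t - 1 : ℕ):ℤ) - ((j.val - 1 : ℕ):ℤ)| = t
          rw [sub_self, abs_zero, habs_eq (j.val + t - 1) (j.val - 1) t (Or.inl (by omega))]
          omega
        have hr := ih ⟨j.val - 1, hb2⟩ (by simp; omega) (i+1)
        have hp : myPar ((i+1 : Fin 2), (⟨j.val - 1, hb2⟩ : Fin n)) = myPar (i, j) :=
          ((myPar_adj hteven ha1).trans (myPar_adj hteven ha2)).symm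
        rw [hp] at hr
        exact (ha1.reachable.trans ha2.reachable).trans hr
      · -- j = t-1 : go across down to column 0
        have ha1 : (tGraph 2 n t).Adj (i, j) (i+1, z0) := by
          refine myAdj ?_ (show j.val ≠ z0.val by omega)
          show |(i:ℤ) - ((i+1 : Fin 2):ℤ)| + |((j.val:ℕ):ℤ) - ((z0.val:ℕ):ℤ)| = t
          rw [habs2 i, habs_eq j.val z0.val (t - 1) (Or.inl (by omega))]
          omega
        have hr := ih z0 (by omega) (i+1)
        have hp : myPar (i+1, z0) = myPar (i, j) := (myPar_adj hteven ha1).symm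
        rw [hp] at hr
        exact ha1.reachable.trans hr
    · -- j ≥ t : go within down by t
      have hb2 : j.val - t < n := by omega
      have ha1 : (tGraph 2 n t).Adj (i, j) (i, ⟨j.val - t, hb2⟩) := by
        refine myAdj ?_ (show j.val ≠ j.val - t by omega)
        show |(i:ℤ) - (i:ℤ)| + |((j.val:ℕ):ℤ) - ((j.val - t : ℕ):ℤ)| = t
        rw [sub_self, abs_zero, habs_eq j.val (j.val - t) t (Or.inl (by omega))]
        omega
      have hr := ih ⟨j.val - t, hb2⟩ (by simp; omega) i
      have hp : myPar (i, (⟨j.val - t, hb2⟩ : Fin n)) = myPar (i, j) :=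
        (myPar_adj hteven ha1).symm
      rw [hp] at hr
      exact ha1.reachable.trans hr

/-- For `n ≥ 2` and even `t` with `2 ≤ t ≤ ⌈n/2⌉`, the `t`-graph `Γ(2,n,t)` of the
dihedral group `D_n` has exactly 2 connected components, and these are isomorphic: the
row-swapping map `(i,j) ↦ (i+1, j)` is a graph automorphism of `Γ(2,n,t)` sending every
vertex to a vertex in the other connected component. -/
theorem dihedral_tGraph_even_two_isomorphic_components (n t : ℕ) (hn : 2 ≤ n)
    (hteven : Even t) (ht : 2 ≤ t) (htub : t ≤ (n + 1) / 2) :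
    Fintype.card (tGraph 2 n t).ConnectedComponent = 2 ∧
      ∃ e : tGraph 2 n t ≃g tGraph 2 n t,
        (∀ v : Fin 2 × Fin n, e v = (v.1 + 1, v.2)) ∧
        ∀ v : Fin 2 × Fin n,
          (tGraph 2 n t).connectedComponentMk (e v) ≠
            (tGraph 2 n t).connectedComponentMk v := by
  have hn3 : 3 ≤ n := by omega
  have htub' : 2 * t ≤ n + 1 := by omega
  have hz : (0 : ℕ) < n := by omega
  have key : ∀ v : Fin 2 × Fin n,
      (tGraph 2 n t).Reachable v (myPar v, ⟨0, hz⟩) := fun v =>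
    reach_base hn3 hteven ht htub' ⟨0, hz⟩ rfl v.2.val v.2 le_rfl v.1
  have hlift : ∀ (v w : Fin 2 × Fin n) (p : (tGraph 2 n t).Walk v w), p.IsPath →
      myPar v = myPar w := fun v w p _ => myPar_reach hteven ⟨p⟩
  let f : (tGraph 2 n t).ConnectedComponent → Fin 2 :=
    SimpleGraph.ConnectedComponent.lift myPar hlift
  have hmk : ∀ v w : Fin 2 × Fin n, myPar v = myPar w →
      (tGraph 2 n t).connectedComponentMk v = (tGraph 2 n t).connectedComponentMk w := by
    intro v w h
    refine SimpleGraph.ConnectedComponent.sound ?_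
    exact (key v).trans (h ▸ (key w).symm)
  have hEquiv : (tGraph 2 n t).ConnectedComponent ≃ Fin 2 := by
    refine ⟨f, fun i => (tGraph 2 n t).connectedComponentMk (i, ⟨0, hz⟩), ?_, ?_⟩
    · refine SimpleGraph.ConnectedComponent.ind fun v => ?_
      apply hmk
      simp [myPar, f]
    · intro i
      simp [f, myPar]
  constructor
  · rw [Fintype.card_congr hEquiv]; simp
  · refine ⟨⟨⟨fun v => (v.1 + 1, v.2), fun v => (v.1 + 1, v.2), ?_, ?_⟩, ?_⟩, ?_, ?_⟩
    · intro v; show (v.1 + 1 + 1, v.2) = v; rw [fin2_inv]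
    · intro v; show (v.1 + 1 + 1, v.2) = v; rw [fin2_inv]
    · intro v w
      show ((v.1 + 1, v.2) ≠ (w.1 + 1, w.2) ∧
          |((v.1 + 1 : Fin 2):ℤ) - ((w.1 + 1 : Fin 2):ℤ)| + |(v.2:ℤ) - (w.2:ℤ)| = (t:ℤ)) ↔
        (v ≠ w ∧ |(v.1:ℤ) - (w.1:ℤ)| + |(v.2:ℤ) - (w.2:ℤ)| = (t:ℤ))
      rw [habsadd]
      constructor <;> rintro ⟨h1, h2⟩ <;> refine ⟨?_, h2⟩
      · intro hc; exact h1 (by rw [hc])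
      · intro hc
        rw [Prod.ext_iff] at hc
        exact h1 (Prod.ext (by have := hc.1; rwa [add_left_inj] at this) hc.2)
    · intro v; rfl
    · intro v hc
      have h2 := congrArg f hc
      simp only [f, SimpleGraph.ConnectedComponent.lift_mk] at h2
      have h3 : myPar ((v.1 + 1 : Fin 2), v.2) = myPar v := h2
      simp only [myPar] at h3
      rw [add_right_comm] at h3
      exact fin2_succ_ne _ h3
end

section
/- Let n ≥ 2 be even and let t = n/2 + s with 1 ≤ s ≤ n/2. Then the t-graph Γ(2,n,t) of the dihedral group D_n has exactly 4(s − 1) + 2 connected components. -/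
lemma tGraph_adj_iff (n t : ℕ) (ht : 2 ≤ t) (x y : Fin 2 × Fin n) :
    (tGraph 2 n t).Adj x y ↔
      (((x.1 : ℕ) = (y.1 : ℕ) ∧ ((x.2 : ℕ) + t = (y.2 : ℕ) ∨ (y.2 : ℕ) + t = (x.2 : ℕ))) ∨
       ((x.1 : ℕ) ≠ (y.1 : ℕ) ∧
        ((x.2 : ℕ) + t = (y.2 : ℕ) + 1 ∨ (y.2 : ℕ) + t = (x.2 : ℕ) + 1))) := by
  obtain ⟨⟨a, ha⟩, ⟨b, hb⟩⟩ := x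
  obtain ⟨⟨c, hc⟩, ⟨e, he⟩⟩ := y
  show (¬(_ = _) ∧ _) ↔ _
  rw [Prod.ext_iff]
  simp only [Fin.ext_iff, Fin.val_mk, tGraph]
  rw [Int.abs_eq_natAbs, Int.abs_eq_natAbs]
  omega

/-- Component label of the vertex `(i,j)`. -/
def fval (h s i j : ℕ) : ℕ :=
  if h - s + 1 ≤ j ∧ j ≤ h + s - 2 then i * (2*s-2) + (j - (h-s+1))
  else 4*s - 4 + (if j ≤ h - s then (i + j + h + s) % 2 else (i + j) % 2)

lemma fval_lt (h s i j : ℕ) (hs : 1 ≤ s) (hsh : s ≤ h) (hi : i < 2) (_hj : j < 2*h) :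
    fval h s i j < 4*(s-1)+2 := by
  have hi' : i = 0 ∨ i = 1 := by omega
  rcases hi' with rfl | rfl <;> simp only [fval] <;> split_ifs <;> omega

lemma fval_adj (n h s : ℕ) (hn2 : n = 2*h) (hs : 1 ≤ s) (hsh : s ≤ h)
    (x y : Fin 2 × Fin n) (hadj : (tGraph 2 n (h+s)).Adj x y) :
    fval h s x.1 x.2 = fval h s y.1 y.2 := by
  rw [tGraph_adj_iff _ _ (by omega)] at hadj
  obtain ⟨⟨a, ha⟩, ⟨b, hb⟩⟩ := x
  obtain ⟨⟨c, hc⟩, ⟨e, he⟩⟩ := y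
  simp only [Fin.val_mk] at hadj ⊢
  have ha' : a = 0 ∨ a = 1 := by omega
  have hc' : c = 0 ∨ c = 1 := by omega
  rcases ha' with rfl | rfl <;> rcases hc' with rfl | rfl <;>
    simp only [fval] <;> split_ifs <;> omega

lemma reach_aux (n h s : ℕ) (hn2 : n = 2*h) (hs : 1 ≤ s) (hsh : s ≤ h)
    (c : ℕ) (hc : c < 2) :
    ∀ k, k ≤ h - s →
      ((tGraph 2 n (h+s)).Reachable (⟨c, hc⟩, ⟨h - s, by omega⟩)
        (⟨(c+k) % 2, by omega⟩, ⟨h - s - k, by omega⟩) ∧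
      (tGraph 2 n (h+s)).Reachable (⟨c, hc⟩, ⟨h - s, by omega⟩)
        (⟨(c+k+1) % 2, by omega⟩, ⟨n - 1 - k, by omega⟩)) := by
  intro k hk
  induction k with
  | zero =>
    constructor
    · have hv : ((⟨(c+0) % 2, by omega⟩ : Fin 2), (⟨h - s - 0, by omega⟩ : Fin n)) =
          ((⟨c, hc⟩ : Fin 2), (⟨h - s, by omega⟩ : Fin n)) := by
        simp only [Prod.ext_iff, Fin.ext_iff, Fin.val_mk]
        omega
      rw [hv]
    · apply SimpleGraph.Adj.reachable
      rw [tGraph_adj_iff _ _ (by omega)]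
      simp only [Fin.val_mk]
      right
      constructor
      · omega
      · left; omega
  | succ k ih =>
    have ih' := (ih (by omega)).2
    have adj1 : (tGraph 2 n (h+s)).Adj
        (⟨(c+k+1) % 2, by omega⟩, ⟨n - 1 - k, by omega⟩)
        (⟨(c+(k+1)) % 2, by omega⟩, ⟨h - s - (k+1), by omega⟩) := by
      rw [tGraph_adj_iff _ _ (by omega)]
      simp only [Fin.val_mk]
      left
      constructor
      · omega
      · right; omega
    have adj2 : (tGraph 2 n (h+s)).Adj
        (⟨(c+(k+1)) % 2, by omega⟩, ⟨h - s - (k+1), by omega⟩)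
        (⟨(c+(k+1)+1) % 2, by omega⟩, ⟨n - 1 - (k+1), by omega⟩) := by
      rw [tGraph_adj_iff _ _ (by omega)]
      simp only [Fin.val_mk]
      right
      constructor
      · omega
      · left; omega
    exact ⟨ih'.trans adj1.reachable, (ih'.trans adj1.reachable).trans adj2.reachable⟩

lemma reach_anchor (n h s : ℕ) (hn2 : n = 2*h) (hs : 1 ≤ s) (hsh : s ≤ h)
    (x : Fin 2 × Fin n)
    (hx : ¬(h - s + 1 ≤ (x.2 : ℕ) ∧ (x.2 : ℕ) ≤ h + s - 2)) :
    ∃ c, ∃ hc : c < 2, fval h s x.1 x.2 = 4*s - 4 + c ∧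
      (tGraph 2 n (h+s)).Reachable (⟨c, hc⟩, ⟨h - s, by omega⟩) x := by
  obtain ⟨⟨a, ha⟩, ⟨b, hb⟩⟩ := x
  simp only [Fin.val_mk] at hx ⊢
  rcases (by omega : b ≤ h - s ∨ h + s - 1 ≤ b) with hbl | hbh
  · refine ⟨(a + b + h + s) % 2, by omega, ?_, ?_⟩
    · have ha' : a = 0 ∨ a = 1 := by omega
      rcases ha' with rfl | rfl <;> simp only [fval] <;> split_ifs <;> omega
    · have hr := (reach_aux n h s hn2 hs hsh ((a + b + h + s) % 2) (by omega)
        (h - s - b) (by omega)).1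
      have hv : ((⟨((a + b + h + s) % 2 + (h - s - b)) % 2, by omega⟩ : Fin 2),
          (⟨h - s - (h - s - b), by omega⟩ : Fin n)) =
          ((⟨a, ha⟩ : Fin 2), (⟨b, hb⟩ : Fin n)) := by
        simp only [Prod.ext_iff, Fin.ext_iff, Fin.val_mk]
        omega
      rwa [hv] at hr
  · refine ⟨(a + b) % 2, by omega, ?_, ?_⟩
    · have ha' : a = 0 ∨ a = 1 := by omega
      rcases ha' with rfl | rfl <;> simp only [fval] <;> split_ifs <;> omega
    · have hr := (reach_aux n h s hn2 hs hsh ((a + b) % 2) (by omega)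
        (n - 1 - b) (by omega)).2
      have hv : ((⟨((a + b) % 2 + (n - 1 - b) + 1) % 2, by omega⟩ : Fin 2),
          (⟨n - 1 - (n - 1 - b), by omega⟩ : Fin n)) =
          ((⟨a, ha⟩ : Fin 2), (⟨b, hb⟩ : Fin n)) := by
        simp only [Prod.ext_iff, Fin.ext_iff, Fin.val_mk]
        omega
      rwa [hv] at hr

lemma reach_of_fval_eq (n h s : ℕ) (hn2 : n = 2*h) (hs : 1 ≤ s) (hsh : s ≤ h)
    (x y : Fin 2 × Fin n) (hf : fval h s x.1 x.2 = fval h s y.1 y.2) :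
    (tGraph 2 n (h+s)).Reachable x y := by
  by_cases hx : h - s + 1 ≤ (x.2 : ℕ) ∧ (x.2 : ℕ) ≤ h + s - 2
  · -- x is isolated (middle); show y = x
    by_cases hy : h - s + 1 ≤ (y.2 : ℕ) ∧ (y.2 : ℕ) ≤ h + s - 2
    · have hxy : x = y := by
        obtain ⟨⟨a, ha⟩, ⟨b, hb⟩⟩ := x
        obtain ⟨⟨c, hc⟩, ⟨e, he⟩⟩ := y
        simp only [Fin.val_mk] at hx hy hf ⊢
        simp only [Prod.ext_iff, Fin.ext_iff, Fin.val_mk]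
        have ha' : a = 0 ∨ a = 1 := by omega
        have hc' : c = 0 ∨ c = 1 := by omega
        rcases ha' with rfl | rfl <;> rcases hc' with rfl | rfl <;>
          simp only [fval] at hf <;> split_ifs at hf <;> omega
      rw [hxy]
    · exfalso
      obtain ⟨cc, hcc, hfy, _⟩ := reach_anchor n h s hn2 hs hsh y hy
      obtain ⟨⟨a, ha⟩, ⟨b, hb⟩⟩ := x
      simp only [Fin.val_mk] at hx hf
      have ha' : a = 0 ∨ a = 1 := by omega
      rcases ha' with rfl | rfl <;> simp only [fval] at hf <;> split_ifs at hf <;> omega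
  · obtain ⟨cx, hcx, hfx, hrx⟩ := reach_anchor n h s hn2 hs hsh x hx
    by_cases hy : h - s + 1 ≤ (y.2 : ℕ) ∧ (y.2 : ℕ) ≤ h + s - 2
    · exfalso
      obtain ⟨⟨c, hc⟩, ⟨e, he⟩⟩ := y
      simp only [Fin.val_mk] at hy hf
      have hc' : c = 0 ∨ c = 1 := by omega
      rcases hc' with rfl | rfl <;> simp only [fval] at hf hfx <;> split_ifs at hf hfx <;> omega
    · obtain ⟨cy, hcy, hfy, hry⟩ := reach_anchor n h s hn2 hs hsh y hy
      have hcxy : cx = cy := by omega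
      subst hcxy
      exact hrx.symm.trans hry

/-- For even `n ≥ 2` and `t = n/2 + s` with `1 ≤ s ≤ n/2`, the `t`-graph `Γ(2,n,t)` of the
dihedral group `D_n` has exactly `4(s - 1) + 2` connected components. -/
theorem dihedral_tGraph_components_of_even_n (n s t : ℕ) (hn : 2 ≤ n) (hneven : Even n)
    (hs : 1 ≤ s) (hsub : s ≤ n / 2) (ht : t = n / 2 + s) :
    Fintype.card (tGraph 2 n t).ConnectedComponent = 4 * (s - 1) + 2 := by
  obtain ⟨h, hn2⟩ := hneven
  have hn2 : n = 2 * h := by omega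
  have hh : n / 2 = h := by omega
  rw [hh] at ht hsub
  subst ht
  set N := 4 * (s - 1) + 2 with hN
  have hlt : ∀ x : Fin 2 × Fin n, fval h s (x.1 : ℕ) (x.2 : ℕ) < N := by
    intro x
    have := x.2.isLt
    exact fval_lt h s _ _ hs hsub x.1.isLt (by omega)
  set f : Fin 2 × Fin n → Fin N := fun x => ⟨fval h s (x.1 : ℕ) (x.2 : ℕ), hlt x⟩ with hfdef
  have hwalk : ∀ (v w : Fin 2 × Fin n) (p : (tGraph 2 n (h+s)).Walk v w), f v = f w := by
    intro v w p
    induction p with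
    | nil => rfl
    | cons hadj p ih =>
      refine Eq.trans ?_ ih
      exact Fin.ext (fval_adj n h s hn2 hs hsub _ _ hadj)
  set g : (tGraph 2 n (h+s)).ConnectedComponent → Fin N :=
    SimpleGraph.ConnectedComponent.lift f (fun v w p _ => hwalk v w p) with hgdef
  have hbij : Function.Bijective g := by
    constructor
    · intro u v
      refine SimpleGraph.ConnectedComponent.ind₂ (fun a b hab => ?_) u v
      have : f a = f b := hab
      have hfv : fval h s (a.1 : ℕ) (a.2 : ℕ) = fval h s (b.1 : ℕ) (b.2 : ℕ) :=
        congrArg Fin.val this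
      exact SimpleGraph.ConnectedComponent.sound
        (reach_of_fval_eq n h s hn2 hs hsub a b hfv)
    · intro v
      have hvlt : (v : ℕ) < N := v.isLt
      by_cases hv : (v : ℕ) < 4 * s - 4
      · by_cases hv2 : (v : ℕ) < 2 * s - 2
        · refine ⟨(tGraph 2 n (h+s)).connectedComponentMk
            (⟨0, by omega⟩, ⟨h - s + 1 + (v : ℕ), by omega⟩), Fin.ext ?_⟩
          show fval h s _ _ = _
          simp only [fval, Fin.val_mk]
          rw [if_pos (by omega)]
          omega
        · refine ⟨(tGraph 2 n (h+s)).connectedComponentMk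
            (⟨1, by omega⟩, ⟨h - s + 1 + ((v : ℕ) - (2*s-2)), by omega⟩), Fin.ext ?_⟩
          show fval h s _ _ = _
          simp only [fval, Fin.val_mk]
          rw [if_pos (by omega)]
          omega
      · refine ⟨(tGraph 2 n (h+s)).connectedComponentMk
          (⟨(v : ℕ) - (4*s-4), by omega⟩, ⟨h - s, by omega⟩), Fin.ext ?_⟩
        show fval h s _ _ = _
        have hc : (v : ℕ) - (4*s-4) = 0 ∨ (v : ℕ) - (4*s-4) = 1 := by omega
        rcases hc with hc | hc <;>
          · simp only [fval, Fin.val_mk, hc]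
            rw [if_neg (by omega), if_pos (by omega)]
            omega
  calc Fintype.card (tGraph 2 n (h+s)).ConnectedComponent
      = Fintype.card (Fin N) := Fintype.card_congr (Equiv.ofBijective g hbij)
    _ = N := Fintype.card_fin N
end

section
/- Let n ≥ 2 and let t satisfy ⌈n/2⌉ < t ≤ n. Then the t-graph Γ(2,n,t) of the dihedral group D_n has exactly 4t − 2n − 4 isolated vertices (vertices of degree 0). -/
/-- For `n ≥ 2` and `⌈n/2⌉ < t ≤ n`, the `t`-graph `Γ(2,n,t)` of the dihedral group `D_n`
has exactly `4t - 2n - 4` isolated vertices (vertices of degree 0). -/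
theorem dihedral_tGraph_card_isolated_vertices (n t : ℕ) (hn : 2 ≤ n)
    (htlb : (n + 1) / 2 < t) (htn : t ≤ n) :
    (Finset.univ.filter fun v : Fin 2 × Fin n => (tGraph 2 n t).degree v = 0).card =
      4 * t - 2 * n - 4 := by
  have ht2 : 2 ≤ t := by omega
  have key : ∀ v : Fin 2 × Fin n, (tGraph 2 n t).degree v = 0 ↔
      (n - t + 1 ≤ (v.2 : ℕ) ∧ (v.2 : ℕ) + 2 ≤ t) := by
    intro v
    have hdeg : (tGraph 2 n t).degree v = 0 ↔ ∀ w, ¬ (tGraph 2 n t).Adj v w := by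
      unfold SimpleGraph.degree
      rw [Finset.card_eq_zero, Finset.eq_empty_iff_forall_notMem]
      simp only [SimpleGraph.mem_neighborFinset]
    rw [hdeg]
    have hi : v.1.val < 2 := v.1.isLt
    have hj : v.2.val < n := v.2.isLt
    constructor
    · intro h
      constructor
      · by_contra hc
        push_neg at hc
        have hjle : (v.2 : ℕ) ≤ n - t := by omega
        refine h (⟨1 - v.1.val, by omega⟩, ⟨v.2.val + t - 1, by omega⟩) ⟨?_, ?_⟩
        · intro he
          have h1 := congrArg (fun p : Fin 2 × Fin n => p.1.val) he
          dsimp only at h1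
          omega
        · show |(v.1.val : ℤ) - ((1 - v.1.val : ℕ) : ℤ)| +
            |(v.2.val : ℤ) - ((v.2.val + t - 1 : ℕ) : ℤ)| = (t : ℤ)
          rw [Int.abs_eq_natAbs, Int.abs_eq_natAbs]
          omega
      · by_contra hc
        push_neg at hc
        have hjge : t - 1 ≤ (v.2 : ℕ) := by omega
        refine h (⟨1 - v.1.val, by omega⟩, ⟨v.2.val - (t - 1), by omega⟩) ⟨?_, ?_⟩
        · intro he
          have h1 := congrArg (fun p : Fin 2 × Fin n => p.1.val) he
          dsimp only at h1
          omega
        · show |(v.1.val : ℤ) - ((1 - v.1.val : ℕ) : ℤ)| +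
            |(v.2.val : ℤ) - ((v.2.val - (t - 1) : ℕ) : ℤ)| = (t : ℤ)
          rw [Int.abs_eq_natAbs, Int.abs_eq_natAbs]
          omega
    · rintro ⟨h1, h2⟩ w ⟨hne, habs⟩
      have hk : w.1.val < 2 := w.1.isLt
      have hl : w.2.val < n := w.2.isLt
      rw [Int.abs_eq_natAbs, Int.abs_eq_natAbs] at habs
      omega
  simp_rw [key]
  have hsplit : (Finset.univ.filter fun v : Fin 2 × Fin n =>
      n - t + 1 ≤ (v.2 : ℕ) ∧ (v.2 : ℕ) + 2 ≤ t) =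
      (Finset.univ : Finset (Fin 2)) ×ˢ
      ((Finset.univ : Finset (Fin n)).filter fun j : Fin n => n - t + 1 ≤ (j : ℕ) ∧ (j : ℕ) + 2 ≤ t) := by
    ext v
    simp [Finset.mem_product]
  rw [hsplit, Finset.card_product]
  have hc : ((Finset.univ : Finset (Fin n)).filter
      fun j : Fin n => n - t + 1 ≤ (j : ℕ) ∧ (j : ℕ) + 2 ≤ t).card =
      ((Finset.range n).filter fun j : ℕ => n - t + 1 ≤ j ∧ j + 2 ≤ t).card := by
    rw [Finset.card_filter, Finset.card_filter]
    exact Fin.sum_univ_eq_sum_range (fun j => if n - t + 1 ≤ j ∧ j + 2 ≤ t then 1 else 0) n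
  rw [hc]
  have hicc : (Finset.range n).filter (fun j : ℕ => n - t + 1 ≤ j ∧ j + 2 ≤ t) =
      Finset.Icc (n - t + 1) (t - 2) := by
    ext j
    simp only [Finset.mem_filter, Finset.mem_range, Finset.mem_Icc]
    omega
  rw [hicc, Nat.card_Icc, Finset.card_univ, Fintype.card_fin]
  omega
end

section
/- Let n ≥ 5 be odd and set t = (n+1)/2. If t is odd, then the t-graph Γ(2,n,t) of the dihedral group D_n is isomorphic to the cycle graph on 2n vertices (a cycle of even length). -/
private lemma tg_absCast (a b : ℕ) : |(a:ℤ) - b| = ((a - b : ℕ) : ℤ) + ((b - a : ℕ) : ℤ) := by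
  rcases le_total a b with h | h
  · rw [abs_of_nonpos (by omega)]; omega
  · rw [abs_of_nonneg (by omega)]; omega

/-- The Hamiltonian-cycle parametrization. -/
private def tg_f (n t k : ℕ) (hn : 0 < n) : Fin 2 × Fin n :=
  (⟨k * t / n % 2, Nat.mod_lt _ (by norm_num)⟩, ⟨k * t % n, Nat.mod_lt _ hn⟩)

private lemma tg_adj_iff {n t : ℕ} (x y : Fin 2 × Fin n) :
    (tGraph 2 n t).Adj x y ↔ (x.1.val ≠ y.1.val ∨ x.2.val ≠ y.2.val) ∧
      ((x.1.val - y.1.val : ℕ) : ℤ) + ((y.1.val - x.1.val : ℕ) : ℤ) +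
      (((x.2.val - y.2.val : ℕ) : ℤ) + ((y.2.val - x.2.val : ℕ) : ℤ)) = t := by
  show (x ≠ y ∧ _) ↔ _
  rw [tg_absCast, tg_absCast, Ne, Prod.ext_iff, Fin.ext_iff, Fin.ext_iff, not_and_or]

/-- Consecutive points on the parametrized cycle are adjacent in the t-graph. -/
private lemma tg_step {n t : ℕ} (hn0 : 0 < n) (hnt : n + 1 = 2 * t) (ht : 3 ≤ t) (k : ℕ) :
    (tGraph 2 n t).Adj (tg_f n t k hn0) (tg_f n t (k + 1) hn0) := by
  have hqs : n * (k * t / n) + k * t % n = k * t := Nat.div_add_mod _ _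
  have hs : k * t % n < n := Nat.mod_lt _ hn0
  have hmod : (k+1) * t % n = (k * t % n + t) % n := by
    conv_lhs => rw [add_mul, one_mul, ← hqs]
    rw [add_assoc, Nat.mul_add_mod]
  have hdiv : (k+1) * t / n = k * t / n + (k * t % n + t) / n := by
    conv_lhs => rw [add_mul, one_mul, ← hqs]
    rw [add_assoc, Nat.mul_add_div hn0]
  rw [tg_adj_iff]
  simp only [tg_f]
  rcases lt_or_ge (k * t % n + t) n with hlt | hge
  · have h1 : (k * t % n + t) % n = k * t % n + t := Nat.mod_eq_of_lt hlt
    have h2 : (k * t % n + t) / n = 0 := Nat.div_eq_of_lt hlt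
    rw [hmod, hdiv, h1, h2]
    generalize k * t / n = q
    generalize k * t % n = s at *
    constructor
    · right; omega
    · have := Nat.mod_lt q (show 0 < 2 by norm_num)
      omega
  · have hrw : k * t % n + t = n * 1 + (k * t % n + t - n) := by omega
    have h1 : (k * t % n + t) % n = k * t % n + t - n := by
      conv_lhs => rw [hrw]
      rw [Nat.mul_add_mod, Nat.mod_eq_of_lt (by omega)]
    have h2 : (k * t % n + t) / n = 1 := by
      rw [hrw, Nat.mul_add_div hn0, Nat.div_eq_of_lt (by omega)]
    rw [hmod, hdiv, h1, h2]
    generalize k * t / n = q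
    generalize k * t % n = s at *
    constructor
    · left
      have := Nat.mod_lt q (show 0 < 2 by norm_num)
      omega
    · have := Nat.mod_lt q (show 0 < 2 by norm_num)
      omega

/-- Adding `n` to the parameter keeps the second coordinate and flips the first. -/
private lemma tg_add_n {n t : ℕ} (hn0 : 0 < n) (htodd : Odd t) (a : ℕ) :
    (a + n) * t % n = a * t % n ∧ (a + n) * t / n % 2 ≠ a * t / n % 2 := by
  have h1 : (a + n) * t = a * t + n * t := by ring
  obtain ⟨c, hc⟩ := htodd
  rw [h1, Nat.add_mul_div_left _ _ hn0, Nat.add_mul_mod_self_left]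
  refine ⟨rfl, ?_⟩
  generalize a * t / n = q
  omega

private lemma tg_add_2n {n t : ℕ} (hn0 : 0 < n) (a : ℕ) :
    tg_f n t (a + 2 * n) hn0 = tg_f n t a hn0 := by
  have h1 : (a + 2 * n) * t = a * t + n * (2 * t) := by ring
  have h2 : (a + 2 * n) * t / n = a * t / n + 2 * t := by
    rw [h1, Nat.add_mul_div_left _ _ hn0]
  have h3 : (a + 2 * n) * t % n = a * t % n := by
    rw [h1, Nat.add_mul_mod_self_left]
  simp only [tg_f, Prod.mk.injEq, Fin.mk.injEq]
  rw [h2, h3]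
  refine ⟨?_, rfl⟩
  generalize a * t / n = q
  omega

private lemma tg_f_mod {n t : ℕ} (hn0 : 0 < n) (a : ℕ) :
    tg_f n t (a % (2 * n)) hn0 = tg_f n t a hn0 := by
  have key : ∀ q a, tg_f n t (a + q * (2 * n)) hn0 = tg_f n t a hn0 := by
    intro q
    induction q with
    | zero => intro a; simp
    | succ q ih =>
        intro a
        have h : a + (q + 1) * (2 * n) = (a + q * (2 * n)) + 2 * n := by ring
        rw [h, tg_add_2n hn0, ih]
  conv_rhs => rw [← Nat.mod_add_div a (2 * n)]
  rw [mul_comm (2 * n) (a / (2 * n))]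
  exact (key (a / (2 * n)) (a % (2 * n))).symm

private lemma tg_modCases {n a b : ℕ} (hn0 : 0 < n) (ha : a < 2 * n) (hb : b < 2 * n)
    (h : a ≡ b [MOD n]) : a = b ∨ a = b + n ∨ b = a + n := by
  obtain ⟨c, hc⟩ := Nat.modEq_iff_dvd.mp h
  have hn' : (0:ℤ) < n := by exact_mod_cast hn0
  have hA : (a:ℤ) < 2 * n := by exact_mod_cast ha
  have hB : (b:ℤ) < 2 * n := by exact_mod_cast hb
  have ha0 : (0:ℤ) ≤ a := by positivity
  have hb0 : (0:ℤ) ≤ b := by positivity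
  have h1 : -2 < c := by
    by_contra h'
    push_neg at h'
    have : (n:ℤ) * c ≤ n * (-2) := mul_le_mul_of_nonneg_left h' (by positivity)
    linarith
  have h2 : c < 2 := by
    by_contra h'
    push_neg at h'
    have : (n:ℤ) * 2 ≤ n * c := mul_le_mul_of_nonneg_left h' (by positivity)
    linarith
  interval_cases c <;> simp only [mul_neg_one, mul_zero, mul_one] at hc <;> omega

private lemma tg_coprime {n t : ℕ} (hnt : n + 1 = 2 * t) (ht : 3 ≤ t) : Nat.gcd n t = 1 := by
  have h1 : n % t = t - 1 := by
    have h : n = (t - 1) + t * 1 := by omega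
    rw [h, Nat.add_mul_mod_self_left, Nat.mod_eq_of_lt (by omega)]
  have h2 : Nat.Coprime (t - 1) t := by
    have h : t = (t - 1) + 1 := by omega
    rw [h]; simp
  rw [Nat.gcd_comm, Nat.gcd_rec, h1]
  exact h2

private lemma tg_two_adj_absurd {t x1 x2 x3 y1 y2 : ℕ}
    (hx1 : x1 < 2) (hx2 : x2 < 2) (hx3 : x3 < 2) (hne : x3 ≠ x2)
    (e1 : ((x1 - x3 : ℕ) : ℤ) + ((x3 - x1 : ℕ) : ℤ) +
      (((y1 - y2 : ℕ) : ℤ) + ((y2 - y1 : ℕ) : ℤ)) = t)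
    (e2 : ((x1 - x2 : ℕ) : ℤ) + ((x2 - x1 : ℕ) : ℤ) +
      (((y1 - y2 : ℕ) : ℤ) + ((y2 - y1 : ℕ) : ℤ)) = t) : False := by
  omega

private lemma tg_case_split {n t x1 x2 y1 y2 : ℕ} (hnt : n + 1 = 2 * t) (ht : 3 ≤ t)
    (hx1 : x1 < 2) (hx2 : x2 < 2) (hy1 : y1 < n) (hy2 : y2 < n)
    (e : ((x1 - x2 : ℕ) : ℤ) + ((x2 - x1 : ℕ) : ℤ) +
      (((y1 - y2 : ℕ) : ℤ) + ((y2 - y1 : ℕ) : ℤ)) = t) :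
    (y2 = y1 + t ∨ y2 + (t - 1) = y1) ∨ (y1 = y2 + t ∨ y1 + (t - 1) = y2) := by
  omega

/-- Key lemma: adjacency plus the mod-n successor relation forces the mod-2n successor. -/
private lemma tg_key {n t : ℕ} (hn0 : 0 < n) (hnt : n + 1 = 2 * t) (ht : 3 ≤ t) (htodd : Odd t)
    (u v : ℕ) (hu : u < 2 * n) (hv : v < 2 * n)
    (hadj : (tGraph 2 n t).Adj (tg_f n t u hn0) (tg_f n t v hn0))
    (hmod : v ≡ u + 1 [MOD n]) : v = (u + 1) % (2 * n) := by
  set w := (u + 1) % (2 * n) with hw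
  have hwlt : w < 2 * n := Nat.mod_lt _ (by omega)
  have hfw : tg_f n t w hn0 = tg_f n t (u + 1) hn0 := tg_f_mod hn0 (u + 1)
  have hstep : (tGraph 2 n t).Adj (tg_f n t u hn0) (tg_f n t w hn0) := by
    rw [hfw]; exact tg_step hn0 hnt ht u
  have hmodw : v ≡ w [MOD n] := by
    refine hmod.trans (Nat.ModEq.symm ?_)
    exact Nat.mod_mod_of_dvd _ ⟨2, by ring⟩
  rcases tg_modCases hn0 hv hwlt hmodw with h | h | h
  · exact h
  · exfalso
    obtain ⟨hj, hr⟩ := tg_add_n (t := t) hn0 htodd w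
    rw [tg_adj_iff] at hadj hstep
    simp only [tg_f] at hadj hstep
    have e1 := hadj.2
    have e2 := hstep.2
    rw [h, hj] at e1
    have hu2 : u * t / n % 2 < 2 := Nat.mod_lt _ (by norm_num)
    have hw2' : w * t / n % 2 < 2 := Nat.mod_lt _ (by norm_num)
    have hwn2 : (w + n) * t / n % 2 < 2 := Nat.mod_lt _ (by norm_num)
    exact tg_two_adj_absurd hu2 hw2' hwn2 hr e1 e2
  · exfalso
    obtain ⟨hj, hr⟩ := tg_add_n (t := t) hn0 htodd v
    rw [tg_adj_iff] at hadj hstep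
    simp only [tg_f] at hadj hstep
    have e1 := hadj.2
    have e2 := hstep.2
    rw [h, hj] at e2
    have hu2 : u * t / n % 2 < 2 := Nat.mod_lt _ (by norm_num)
    have hw2' : v * t / n % 2 < 2 := Nat.mod_lt _ (by norm_num)
    have hwn2 : (v + n) * t / n % 2 < 2 := Nat.mod_lt _ (by norm_num)
    exact tg_two_adj_absurd hu2 hwn2 hw2' (Ne.symm hr) e1 e2

/-- From adjacency, one of the two mod-n successor relations holds. -/
private lemma tg_succ_of_adj {n t : ℕ} (hn0 : 0 < n) (hnt : n + 1 = 2 * t) (ht : 3 ≤ t)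
    (u v : ℕ)
    (hadj : (tGraph 2 n t).Adj (tg_f n t u hn0) (tg_f n t v hn0)) :
    v ≡ u + 1 [MOD n] ∨ u ≡ v + 1 [MOD n] := by
  have hcop : Nat.gcd n t = 1 := tg_coprime hnt ht
  rw [tg_adj_iff] at hadj
  simp only [tg_f] at hadj
  have e := hadj.2
  have hju : u * t % n < n := Nat.mod_lt _ hn0
  have hjv : v * t % n < n := Nat.mod_lt _ hn0
  have hru : u * t / n % 2 < 2 := Nat.mod_lt _ (by norm_num)
  have hrv : v * t / n % 2 < 2 := Nat.mod_lt _ (by norm_num)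
  have hmu : u * t % n ≡ u * t [MOD n] := Nat.mod_modEq _ _
  have hmv : v * t % n ≡ v * t [MOD n] := Nat.mod_modEq _ _
  have hself_u : u * t + n ≡ u * t [MOD n] := by
    simpa using Nat.add_mul_modEq_self (u * t) 1 n
  have hself_v : v * t + n ≡ v * t [MOD n] := by
    simpa using Nat.add_mul_modEq_self (v * t) 1 n
  have hcases : (v * t % n = u * t % n + t ∨ v * t % n + (t - 1) = u * t % n) ∨
      (u * t % n = v * t % n + t ∨ u * t % n + (t - 1) = v * t % n) := by
    exact tg_case_split hnt ht hru hrv hju hjv e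
  rcases hcases with (h | h) | (h | h)
  · left
    have h2 : v * t ≡ (u + 1) * t [MOD n] := by
      rw [add_mul, one_mul]
      calc v * t ≡ v * t % n [MOD n] := hmv.symm
        _ = u * t % n + t := h
        _ ≡ u * t + t [MOD n] := hmu.add_right t
    exact Nat.ModEq.cancel_right_of_coprime hcop h2
  · left
    have h2 : v * t ≡ (u + 1) * t [MOD n] := by
      rw [add_mul, one_mul]
      calc v * t ≡ v * t + n [MOD n] := hself_v.symm
        _ ≡ v * t % n + n [MOD n] := hmv.symm.add_right n
        _ = u * t % n + t := by omega
        _ ≡ u * t + t [MOD n] := hmu.add_right t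
    exact Nat.ModEq.cancel_right_of_coprime hcop h2
  · right
    have h2 : u * t ≡ (v + 1) * t [MOD n] := by
      rw [add_mul, one_mul]
      calc u * t ≡ u * t % n [MOD n] := hmu.symm
        _ = v * t % n + t := h
        _ ≡ v * t + t [MOD n] := hmv.add_right t
    exact Nat.ModEq.cancel_right_of_coprime hcop h2
  · right
    have h2 : u * t ≡ (v + 1) * t [MOD n] := by
      rw [add_mul, one_mul]
      calc u * t ≡ u * t + n [MOD n] := hself_u.symm
        _ ≡ u * t % n + n [MOD n] := hmu.symm.add_right n
        _ = v * t % n + t := by omega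
        _ ≡ v * t + t [MOD n] := hmv.add_right t
    exact Nat.ModEq.cancel_right_of_coprime hcop h2

/-- For odd `n ≥ 5` and `t = (n+1)/2` odd, the `t`-graph `Γ(2,n,t)` of the dihedral group
`D_n` is isomorphic to the cycle graph on `2n` vertices (a cycle of even length). -/
theorem dihedral_tGraph_iso_cycle (n t : ℕ) (hn : 5 ≤ n) (hnodd : Odd n)
    (ht : t = (n + 1) / 2) (htodd : Odd t) :
    Nonempty (tGraph 2 n t ≃g SimpleGraph.cycleGraph (2 * n)) := by
  have hnt : n + 1 = 2 * t := by
    obtain ⟨c, hc⟩ := hnodd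
    omega
  have ht3 : 3 ≤ t := by omega
  have hn0 : 0 < n := by omega
  haveI : NeZero (2 * n) := ⟨by omega⟩
  have hcop : Nat.gcd n t = 1 := tg_coprime hnt ht3
  set F : Fin (2 * n) → Fin 2 × Fin n := fun k => tg_f n t k.val hn0 with hF
  have hone : (1 : Fin (2 * n)).val = 1 := by
    rw [Fin.val_one']; exact Nat.mod_eq_of_lt (by omega)
  have hsucc : ∀ u : Fin (2 * n), (u + 1).val = (u.val + 1) % (2 * n) := by
    intro u; rw [Fin.add_def, hone]
  have hstepF : ∀ u : Fin (2 * n), (tGraph 2 n t).Adj (F u) (F (u + 1)) := by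
    intro u
    show (tGraph 2 n t).Adj (tg_f n t u.val hn0) (tg_f n t (u + 1).val hn0)
    rw [hsucc u, tg_f_mod hn0]
    exact tg_step hn0 hnt ht3 u.val
  have hinj : Function.Injective F := by
    intro a b hab
    simp only [hF, tg_f, Prod.mk.injEq, Fin.mk.injEq] at hab
    have hmod : a.val * t ≡ b.val * t [MOD n] := hab.2
    have h := Nat.ModEq.cancel_right_of_coprime hcop hmod
    rcases tg_modCases hn0 a.isLt b.isLt h with hc | hc | hc
    · exact Fin.ext hc
    · exfalso
      obtain ⟨_, hr⟩ := tg_add_n (t := t) hn0 htodd b.val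
      rw [hc] at hab
      exact hr hab.1
    · exfalso
      obtain ⟨_, hr⟩ := tg_add_n (t := t) hn0 htodd a.val
      rw [hc] at hab
      exact hr hab.1.symm
  have hbij : Function.Bijective F := by
    rw [Fintype.bijective_iff_injective_and_card]
    exact ⟨hinj, by simp [mul_comm]⟩
  refine ⟨SimpleGraph.Iso.symm ⟨Equiv.ofBijective F hbij, ?_⟩⟩
  intro u v
  show (tGraph 2 n t).Adj (F u) (F v) ↔ (SimpleGraph.cycleGraph (2 * n)).Adj u v
  rw [SimpleGraph.cycleGraph_adj']
  constructor
  · intro hadj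
    rcases tg_succ_of_adj hn0 hnt ht3 u.val v.val hadj with hm | hm
    · have hkey := tg_key hn0 hnt ht3 htodd u.val v.val u.isLt v.isLt hadj hm
      have hv1 : v = u + 1 := Fin.ext (by rw [hsucc u, ← hkey])
      right
      rw [hv1, add_sub_cancel_left, hone]
    · have hkey := tg_key hn0 hnt ht3 htodd v.val u.val v.isLt u.isLt hadj.symm hm
      have hu1 : u = v + 1 := Fin.ext (by rw [hsucc v, ← hkey])
      left
      rw [hu1, add_sub_cancel_left, hone]
  · rintro (h | h)
    · have : u - v = 1 := Fin.ext (by rw [h, hone])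
      have hu1 : u = v + 1 := by
        rw [sub_eq_iff_eq_add] at this
        rw [this, add_comm]
      rw [hu1]
      exact (hstepF v).symm
    · have : v - u = 1 := Fin.ext (by rw [h, hone])
      have hv1 : v = u + 1 := by
        rw [sub_eq_iff_eq_add] at this
        rw [this, add_comm]
      rw [hv1]
      exact hstepF u
end

section
/- Let n ≥ 5 be odd and set t = (n+1)/2. If t is even, then the t-graph Γ(2,n,t) of the dihedral group D_n has exactly 2 connected components and its chromatic number is 3. -/
namespace DihedralTGraphAux

/-- The vertex at position `k` on the cycle of component `e`. -/
def vtx (r e k : ℕ) : Fin 2 × Fin (4*r+7) :=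
  (⟨(k * (2*r+4) % (4*r+7) + e) % 2, by omega⟩,
   ⟨k * (2*r+4) % (4*r+7), Nat.mod_lt _ (by omega)⟩)

lemma vtx_adj (r e k : ℕ) :
    (tGraph 2 (4*r+7) (2*r+4)).Adj (vtx r e k) (vtx r e (k+1)) := by
  have hN : 0 < 4*r+7 := by omega
  set j := k * (2*r+4) % (4*r+7) with hjdef
  have hj : j < 4*r+7 := Nat.mod_lt _ hN
  have hj' : (k+1) * (2*r+4) % (4*r+7) = (j + (2*r+4)) % (4*r+7) := by
    rw [hjdef, Nat.mod_add_mod, add_one_mul]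
  by_cases hc : j + (2*r+4) < 4*r+7
  · have h1 : (k+1) * (2*r+4) % (4*r+7) = j + (2*r+4) := by
      rw [hj', Nat.mod_eq_of_lt hc]
    constructor
    · intro h
      simp only [vtx, Prod.ext_iff, Fin.ext_iff, h1, ← hjdef] at h
      omega
    · simp only [vtx, h1, ← hjdef]
      rcases abs_cases (((((j + e) % 2 : ℕ) : ℤ)) - (((j + (2*r+4) + e) % 2 : ℕ) : ℤ)) with ⟨ha, ha'⟩ | ⟨ha, ha'⟩ <;>
        rcases abs_cases (((j : ℕ) : ℤ) - ((j + (2*r+4) : ℕ) : ℤ)) with ⟨hb, hb'⟩ | ⟨hb, hb'⟩ <;>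
        rw [ha, hb] <;> push_cast <;> omega
  · have h1 : (k+1) * (2*r+4) % (4*r+7) = j - (2*r+3) := by
      rw [hj', Nat.mod_eq_sub_mod (by omega), Nat.mod_eq_of_lt (by omega)]
      omega
    constructor
    · intro h
      simp only [vtx, Prod.ext_iff, Fin.ext_iff, h1, ← hjdef] at h
      omega
    · simp only [vtx, h1, ← hjdef]
      rcases abs_cases (((((j + e) % 2 : ℕ) : ℤ)) - (((j - (2*r+3) + e) % 2 : ℕ) : ℤ)) with ⟨ha, ha'⟩ | ⟨ha, ha'⟩ <;>
        rcases abs_cases (((j : ℕ) : ℤ) - ((j - (2*r+3) : ℕ) : ℤ)) with ⟨hb, hb'⟩ | ⟨hb, hb'⟩ <;>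
        rw [ha, hb] <;> push_cast <;> omega

lemma vtx_reach (r e k : ℕ) :
    (tGraph 2 (4*r+7) (2*r+4)).Reachable (vtx r e 0) (vtx r e k) := by
  induction k with
  | zero => exact SimpleGraph.Reachable.refl _
  | succ k ih => exact ih.trans (vtx_adj r e k).reachable

lemma vtx_surj (r : ℕ) (v : Fin 2 × Fin (4*r+7)) :
    vtx r ((v.1.val + v.2.val) % 2) (2 * v.2.val % (4*r+7)) = v := by
  obtain ⟨⟨i, hi⟩, ⟨j, hj⟩⟩ := v
  have key : (2 * j % (4*r+7)) * (2*r+4) % (4*r+7) = j := by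
    have h1 : (2 * j % (4*r+7)) * (2*r+4) % (4*r+7) = 2 * j * (2*r+4) % (4*r+7) :=
      Nat.mod_mul_mod _ _ _
    have h2 : 2 * j * (2*r+4) = j + j * (4*r+7) := by ring
    rw [h1, h2, Nat.add_mul_mod_self_right, Nat.mod_eq_of_lt hj]
  refine Prod.ext (Fin.ext ?_) (Fin.ext ?_)
  · show (2 * j % (4*r+7) * (2*r+4) % (4*r+7) + (i + j) % 2) % 2 = i
    rw [key]; omega
  · exact key

/-- Parity of a vertex: a connected-component invariant. -/
def par (r : ℕ) (v : Fin 2 × Fin (4*r+7)) : Fin 2 :=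
  ⟨(v.1.val + v.2.val) % 2, by omega⟩

lemma par_adj (r : ℕ) {v w : Fin 2 × Fin (4*r+7)}
    (h : (tGraph 2 (4*r+7) (2*r+4)).Adj v w) : par r v = par r w := by
  obtain ⟨-, heq⟩ := h
  have hi1 := v.1.isLt; have hi2 := w.1.isLt
  have hj1 := v.2.isLt; have hj2 := w.2.isLt
  simp only [par, Fin.ext_iff]
  rcases abs_cases (((v.1 : ℕ) : ℤ) - ((w.1 : ℕ) : ℤ)) with ⟨ha, ha'⟩ | ⟨ha, ha'⟩ <;>
    rcases abs_cases (((v.2 : ℕ) : ℤ) - ((w.2 : ℕ) : ℤ)) with ⟨hb, hb'⟩ | ⟨hb, hb'⟩ <;>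
    rw [ha, hb] at heq <;> push_cast at heq <;> omega

lemma card_components (r : ℕ) :
    Fintype.card (tGraph 2 (4*r+7) (2*r+4)).ConnectedComponent = 2 := by
  have hw : ∀ (v w : Fin 2 × Fin (4*r+7)) (p : (tGraph 2 (4*r+7) (2*r+4)).Walk v w),
      par r v = par r w := by
    intro v w p
    induction p with
    | nil => rfl
    | cons h _ ih => exact (par_adj r h).trans ih
  let φ : (tGraph 2 (4*r+7) (2*r+4)).ConnectedComponent → Fin 2 :=
    SimpleGraph.ConnectedComponent.lift (par r) (fun v w p _ => hw v w p)
  have hbij : Function.Bijective φ := by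
    constructor
    · intro c d
      refine SimpleGraph.ConnectedComponent.ind₂ (fun v w hpar => ?_) c d
      simp only [φ, SimpleGraph.ConnectedComponent.lift_mk] at hpar
      have hpar' : (v.1.val + v.2.val) % 2 = (w.1.val + w.2.val) % 2 := by
        simpa [par, Fin.ext_iff] using hpar
      apply SimpleGraph.ConnectedComponent.sound
      have h1 := vtx_reach r ((v.1.val + v.2.val) % 2) (2 * v.2.val % (4*r+7))
      have h2 := vtx_reach r ((w.1.val + w.2.val) % 2) (2 * w.2.val % (4*r+7))
      rw [vtx_surj] at h1 h2
      rw [hpar'] at h1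
      exact h1.symm.trans h2
    · intro b
      refine ⟨(tGraph 2 (4*r+7) (2*r+4)).connectedComponentMk (⟨0, by omega⟩, ⟨b.val, by omega⟩), ?_⟩
      simp only [φ, SimpleGraph.ConnectedComponent.lift_mk, par, Fin.ext_iff]
      have := b.isLt
      simpa using by omega
  rw [Fintype.card_of_bijective hbij, Fintype.card_fin]

/-- The color of a cycle position. -/
def colFun (r p : ℕ) : ℕ := if p = 4*r+6 then 2 else p % 2

lemma colFun_lt (r p : ℕ) : colFun r p < 3 := by
  unfold colFun; split <;> omega

lemma colFun_ne (r p : ℕ) (hp : p < 4*r+7) :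
    colFun r p ≠ colFun r ((p+1) % (4*r+7)) := by
  by_cases h : p = 4*r+6
  · subst h
    have : (4*r+6+1) % (4*r+7) = 0 := by
      have : 4*r+6+1 = 4*r+7 := by omega
      rw [this, Nat.mod_self]
    rw [this]
    simp [colFun]
  · have h1 : (p+1) % (4*r+7) = p + 1 := Nat.mod_eq_of_lt (by omega)
    rw [h1]
    unfold colFun
    split <;> split <;> omega

lemma pos_step (r : ℕ) {v w : Fin 2 × Fin (4*r+7)}
    (h : (tGraph 2 (4*r+7) (2*r+4)).Adj v w) :
    2 * w.2.val % (4*r+7) = (2 * v.2.val % (4*r+7) + 1) % (4*r+7) ∨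
    2 * v.2.val % (4*r+7) = (2 * w.2.val % (4*r+7) + 1) % (4*r+7) := by
  obtain ⟨hne, heq⟩ := h
  have hi1 := v.1.isLt; have hi2 := w.1.isLt
  have hj1 := v.2.isLt; have hj2 := w.2.isLt
  have hne' : ¬ (v.1.val = w.1.val ∧ v.2.val = w.2.val) := by
    intro ⟨h1, h2⟩
    exact hne (Prod.ext (Fin.ext h1) (Fin.ext h2))
  have hcases : w.2.val = v.2.val + (2*r+4) ∨ v.2.val = w.2.val + (2*r+4) ∨
      w.2.val = v.2.val + (2*r+3) ∨ v.2.val = w.2.val + (2*r+3) := by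
    rcases abs_cases (((v.1 : ℕ) : ℤ) - ((w.1 : ℕ) : ℤ)) with ⟨ha, ha'⟩ | ⟨ha, ha'⟩ <;>
      rcases abs_cases (((v.2 : ℕ) : ℤ) - ((w.2 : ℕ) : ℤ)) with ⟨hb, hb'⟩ | ⟨hb, hb'⟩ <;>
      rw [ha, hb] at heq <;> push_cast at heq <;> omega
  have key : ∀ a : ℕ, 2 * (a + (2*r+4)) % (4*r+7) = (2 * a % (4*r+7) + 1) % (4*r+7) := by
    intro a
    rw [Nat.mod_add_mod]
    have : 2 * (a + (2*r+4)) = (2 * a + 1) + (4*r+7) := by ring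
    rw [this, Nat.add_mod_right]
  have key' : ∀ a : ℕ, 2 * a % (4*r+7) = (2 * (a + (2*r+3)) % (4*r+7) + 1) % (4*r+7) := by
    intro a
    rw [Nat.mod_add_mod]
    have : 2 * (a + (2*r+3)) + 1 = 2 * a + (4*r+7) := by ring
    rw [this, Nat.add_mod_right]
  rcases hcases with h | h | h | h
  · left; rw [h]; exact key _
  · right; rw [h]; exact key _
  · right; rw [h]; exact key' _
  · left; rw [h]; exact key' _

/-- The explicit proper 3-coloring. -/
lemma colorable3 (r : ℕ) : (tGraph 2 (4*r+7) (2*r+4)).Colorable 3 := by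
  refine ⟨SimpleGraph.Coloring.mk
    (fun v => ⟨colFun r (2 * v.2.val % (4*r+7)), colFun_lt _ _⟩) ?_⟩
  intro v w hadj heq
  have hp : 2 * v.2.val % (4*r+7) < 4*r+7 := Nat.mod_lt _ (by omega)
  have hq : 2 * w.2.val % (4*r+7) < 4*r+7 := Nat.mod_lt _ (by omega)
  have heq' : colFun r (2 * v.2.val % (4*r+7)) = colFun r (2 * w.2.val % (4*r+7)) := by
    simpa [Fin.ext_iff] using heq
  rcases pos_step r hadj with h | h
  · exact colFun_ne r _ hp (by rw [← h]; exact heq')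
  · exact colFun_ne r _ hq (by rw [← h]; exact heq'.symm)

lemma not_colorable2 (r : ℕ) : ¬ (tGraph 2 (4*r+7) (2*r+4)).Colorable 2 := by
  rintro ⟨C⟩
  set f : ℕ → Fin 2 := fun k => C (vtx r 0 k) with hf
  have lem : ∀ a b : Fin 2, a ≠ b → b = 1 - a := by decide
  have lem2 : ∀ a : Fin 2, 1 - (1 - a) = a := by decide
  have lem3 : ∀ a : Fin 2, a ≠ 1 - a := by decide
  have hstep : ∀ k, f (k+1) = 1 - f k := by
    intro k
    exact lem _ _ (C.valid (vtx_adj r 0 k))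
  have halt : ∀ k, f k = if Even k then f 0 else 1 - f 0 := by
    intro k
    induction k with
    | zero => simp
    | succ k ih =>
      rw [hstep, ih]
      by_cases hk : Even k
      · have hk1 : ¬ Even (k+1) := by simp [Nat.even_add_one, hk]
        rw [if_pos hk, if_neg hk1]
      · have hk1 : Even (k+1) := by simp [Nat.even_add_one, hk]
        rw [if_neg hk, if_pos hk1, lem2]
  have hper : f (4*r+7) = f 0 := by
    have : vtx r 0 (4*r+7) = vtx r 0 0 := by
      simp [vtx, Prod.ext_iff, Fin.ext_iff, Nat.mul_mod_right]
    simp only [hf, this]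
  have hodd : ¬ Even (4*r+7) := by
    rintro ⟨x, hx⟩; omega
  rw [halt (4*r+7), if_neg hodd] at hper
  exact lem3 (f 0) hper.symm

lemma chrom3 (r : ℕ) : (tGraph 2 (4*r+7) (2*r+4)).chromaticNumber = 3 := by
  refine le_antisymm ?_ ?_
  · have := (SimpleGraph.chromaticNumber_le_iff_colorable).mpr (colorable3 r)
    exact_mod_cast this
  · by_contra h
    push_neg at h
    have h2 : (tGraph 2 (4*r+7) (2*r+4)).chromaticNumber ≤ 2 := by
      have h3 : (tGraph 2 (4*r+7) (2*r+4)).chromaticNumber < 2 + 1 := by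
        have e : ((2:ℕ∞) + 1) = 3 := by norm_num
        rw [e]; exact h
      exact (ENat.lt_add_one_iff (by simp)).mp h3
    exact not_colorable2 r ((SimpleGraph.chromaticNumber_le_iff_colorable (n := 2)).mp
      (by exact_mod_cast h2))

end DihedralTGraphAux

/-- For odd `n ≥ 5` and `t = (n+1)/2` even, the `t`-graph `Γ(2,n,t)` of the dihedral group
`D_n` has exactly 2 connected components and chromatic number 3. -/
theorem dihedral_tGraph_two_components_chromatic_three (n t : ℕ) (hn : 5 ≤ n)
    (hnodd : Odd n) (ht : t = (n + 1) / 2) (hteven : Even t) :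
    Fintype.card (tGraph 2 n t).ConnectedComponent = 2 ∧
      (tGraph 2 n t).chromaticNumber = 3 := by
  obtain ⟨m, hm⟩ := hnodd
  obtain ⟨u, hu⟩ := hteven
  have hr : ∃ r, n = 4*r+7 ∧ t = 2*r+4 := by
    refine ⟨u - 2, by omega, by omega⟩
  obtain ⟨r, hn', ht'⟩ := hr
  subst hn' ht'
  exact ⟨DihedralTGraphAux.card_components r, DihedralTGraphAux.chrom3 r⟩
end

section
/- Let n ≥ 2 be even and set t = n/2 + 1. Then the t-graph Γ(2,n,t) of the dihedral group D_n is isomorphic to the disjoint union of two path graphs, each on n vertices; in particular it has exactly 2 connected components, which are isomorphic path graphs. -/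
/-- Row of the `k`-th vertex on the path. -/
def rfn (k : ℕ) : ℕ := (k + 1) / 2 % 2
/-- Column of the `k`-th vertex on the path. -/
def cfn (m k : ℕ) : ℕ := if k % 2 = 0 then m + k / 2 else k / 2
/-- Position on the path of a vertex with column `j`. -/
def kfn (m j : ℕ) : ℕ := if j < m then 2 * j + 1 else 2 * (j - m)

lemma rfn_lt (k : ℕ) : rfn k < 2 := by unfold rfn; omega
lemma cfn_lt {m k : ℕ} (hk : k < m + m) : cfn m k < m + m := by
  unfold cfn; split_ifs <;> omega
lemma kfn_lt {m j : ℕ} (hj : j < m + m) : kfn m j < m + m := by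
  unfold kfn; split_ifs <;> omega
lemma kfn_cfn {m k : ℕ} (hk : k < m + m) : kfn m (cfn m k) = k := by
  unfold kfn cfn; split_ifs <;> omega
lemma cfn_kfn {m j : ℕ} (hj : j < m + m) : cfn m (kfn m j) = j := by
  unfold kfn cfn; split_ifs <;> omega

open SimpleGraph in
lemma tGraph_adj_ll (m : ℕ) {k l : ℕ} (hk : k < m + m) (hl : l < m + m)
    (h1 : rfn k < 2) (h2 : cfn m k < m + m) (h3 : rfn l < 2) (h4 : cfn m l < m + m) :
    (tGraph 2 (m + m) (m + 1)).Adj (⟨rfn k, h1⟩, ⟨cfn m k, h2⟩) (⟨rfn l, h3⟩, ⟨cfn m l, h4⟩)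
    ↔ (pathGraph (m + m)).Adj ⟨k, hk⟩ ⟨l, hl⟩ := by
  simp only [tGraph, pathGraph_adj, ne_eq, Prod.mk.injEq, Fin.mk.injEq, not_and, Fin.val_mk]
  simp only [rfn, cfn]
  split_ifs <;> rw [Int.abs_eq_natAbs, Int.abs_eq_natAbs] <;> omega

open SimpleGraph in
lemma tGraph_adj_rr (m : ℕ) {k l : ℕ} (hk : k < m + m) (hl : l < m + m)
    (h1 : 1 - rfn k < 2) (h2 : cfn m k < m + m) (h3 : 1 - rfn l < 2) (h4 : cfn m l < m + m) :
    (tGraph 2 (m + m) (m + 1)).Adj (⟨1 - rfn k, h1⟩, ⟨cfn m k, h2⟩)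
      (⟨1 - rfn l, h3⟩, ⟨cfn m l, h4⟩)
    ↔ (pathGraph (m + m)).Adj ⟨k, hk⟩ ⟨l, hl⟩ := by
  simp only [tGraph, pathGraph_adj, ne_eq, Prod.mk.injEq, Fin.mk.injEq, not_and, Fin.val_mk]
  simp only [rfn, cfn]
  split_ifs <;> rw [Int.abs_eq_natAbs, Int.abs_eq_natAbs] <;> omega

open SimpleGraph in
lemma tGraph_adj_lr (m : ℕ) {k l : ℕ} (hk : k < m + m) (hl : l < m + m)
    (h1 : rfn k < 2) (h2 : cfn m k < m + m) (h3 : 1 - rfn l < 2) (h4 : cfn m l < m + m) :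
    ¬ (tGraph 2 (m + m) (m + 1)).Adj (⟨rfn k, h1⟩, ⟨cfn m k, h2⟩)
      (⟨1 - rfn l, h3⟩, ⟨cfn m l, h4⟩) := by
  simp only [tGraph, ne_eq, Prod.mk.injEq, Fin.mk.injEq, not_and, Fin.val_mk]
  simp only [rfn, cfn]
  split_ifs <;> rw [Int.abs_eq_natAbs, Int.abs_eq_natAbs] <;> omega

lemma sum_adj_isLeft {α β : Type*} {G : SimpleGraph α} {H : SimpleGraph β} {u v : α ⊕ β}
    (h : (G ⊕g H).Adj u v) : u.isLeft = v.isLeft := by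
  cases u <;> cases v <;> simp_all [SimpleGraph.sum_adj]

lemma sum_reachable_isLeft {α β : Type*} {G : SimpleGraph α} {H : SimpleGraph β} {u v : α ⊕ β}
    (h : (G ⊕g H).Reachable u v) : u.isLeft = v.isLeft := by
  obtain ⟨w⟩ := h
  induction w with
  | nil => rfl
  | cons h _ ih => exact (sum_adj_isLeft h).trans ih

open SimpleGraph in
/-- For even `n ≥ 2` and `t = n/2 + 1`, the `t`-graph `Γ(2,n,t)` of the dihedral group
`D_n` is isomorphic to the disjoint union of two path graphs on `n` vertices each; in
particular it has exactly 2 connected components, which are isomorphic path graphs. -/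
theorem dihedral_tGraph_iso_two_paths (n t : ℕ) (hn : 2 ≤ n) (hneven : Even n)
    (ht : t = n / 2 + 1) :
    Nonempty (tGraph 2 n t ≃g (SimpleGraph.pathGraph n ⊕g SimpleGraph.pathGraph n)) ∧
      Fintype.card (tGraph 2 n t).ConnectedComponent = 2 := by
  obtain ⟨m, rfl⟩ := hneven
  have hm : 1 ≤ m := by omega
  have ht' : t = m + 1 := by omega
  subst ht'
  let e : (Fin (m + m) ⊕ Fin (m + m)) ≃ (Fin 2 × Fin (m + m)) :=
    { toFun := Sum.elim
        (fun k => (⟨rfn k, rfn_lt k⟩, ⟨cfn m k, cfn_lt k.isLt⟩))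
        (fun k => (⟨1 - rfn k, by have := rfn_lt k; omega⟩, ⟨cfn m k, cfn_lt k.isLt⟩))
      invFun := fun x =>
        if (x.1 : ℕ) = rfn (kfn m (x.2 : ℕ))
        then Sum.inl ⟨kfn m x.2, kfn_lt x.2.isLt⟩
        else Sum.inr ⟨kfn m x.2, kfn_lt x.2.isLt⟩
      left_inv := by
        rintro (⟨k, hk⟩ | ⟨k, hk⟩)
        · dsimp only [Sum.elim_inl]
          rw [if_pos]
          · exact congrArg Sum.inl (Fin.ext (by simp [kfn_cfn hk]))
          · simp [kfn_cfn hk]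
        · dsimp only [Sum.elim_inr]
          rw [if_neg]
          · exact congrArg Sum.inr (Fin.ext (by simp [kfn_cfn hk]))
          · simp only [Fin.val_mk, kfn_cfn hk]
            have := rfn_lt k; omega
      right_inv := by
        rintro ⟨⟨i, hi⟩, ⟨j, hj⟩⟩
        dsimp only
        by_cases h : i = rfn (kfn m j)
        · rw [if_pos (by simpa using h)]
          simp only [Sum.elim_inl]
          exact Prod.ext (Fin.ext (by simp [h])) (Fin.ext (by simp [cfn_kfn hj]))
        · rw [if_neg (by simpa using h)]
          simp only [Sum.elim_inr]
          refine Prod.ext (Fin.ext ?_) (Fin.ext (by simp [cfn_kfn hj]))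
          have := rfn_lt (kfn m j); simp only [Fin.val_mk]; omega }
  have key : ∀ a b : Fin (m + m) ⊕ Fin (m + m),
      (tGraph 2 (m + m) (m + 1)).Adj (e a) (e b) ↔
      (pathGraph (m + m) ⊕g pathGraph (m + m)).Adj a b := by
    rintro (⟨k, hk⟩ | ⟨k, hk⟩) (⟨l, hl⟩ | ⟨l, hl⟩)
    · exact tGraph_adj_ll m hk hl _ _ _ _
    · exact iff_of_false (tGraph_adj_lr m hk hl _ _ _ _) (by simp [SimpleGraph.sum_adj])
    · exact iff_of_false (fun h => tGraph_adj_lr m hl hk _ _ _ _ h.symm)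
        (by simp [SimpleGraph.sum_adj])
    · exact tGraph_adj_rr m hk hl _ _ _ _
  have iso : (pathGraph (m + m) ⊕g pathGraph (m + m)) ≃g tGraph 2 (m + m) (m + 1) :=
    ⟨e, key _ _⟩
  refine ⟨⟨iso.symm⟩, ?_⟩
  rw [← Fintype.card_congr iso.connectedComponentEquiv]
  rw [← Nat.card_eq_fintype_card, Nat.card_eq_two_iff]
  have h0 : (0 : ℕ) < m + m := by omega
  refine ⟨(pathGraph (m+m) ⊕g pathGraph (m+m)).connectedComponentMk (Sum.inl ⟨0, h0⟩),
    (pathGraph (m+m) ⊕g pathGraph (m+m)).connectedComponentMk (Sum.inr ⟨0, h0⟩), ?_, ?_⟩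
  · intro h
    have := sum_reachable_isLeft ((SimpleGraph.ConnectedComponent.eq).mp h)
    simp at this
  · have hconn : (pathGraph (m + m)).Connected := by
      have h' : m + m = (m + m - 1) + 1 := by omega
      rw [h']; exact pathGraph_connected _
    ext c
    simp only [Set.mem_insert_iff, Set.mem_singleton_iff, Set.mem_univ, iff_true]
    induction c using SimpleGraph.ConnectedComponent.ind with
    | _ v =>
      rcases v with a | b
      · left
        exact SimpleGraph.ConnectedComponent.sound
          ((hconn.preconnected a ⟨0, h0⟩).map SimpleGraph.Embedding.sumInl.toHom)
      · right
        exact SimpleGraph.ConnectedComponent.sound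
          ((hconn.preconnected b ⟨0, h0⟩).map SimpleGraph.Embedding.sumInr.toHom)
end
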